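/- arXiv:1209.2788 — 3 statements merged into one kernel-verified Lean document; each statement's English description precedes it below -/
import Mathlib

section
/- For the string algebra A = kQ/I where Q is the linear quiver 1 →^α 2 →^β 3 →^τ 4 and I = ⟨αβτ⟩, the strings w = αβ and v = βτ admit extensions from w to v (since wτ = αβτ is excluded but v is obtained by overlap), yet Ext^1_A(M(w), M(v)) = 0 because M(w) = M(αβ) is a projective A-module. Hence Theorem 1 fails for string algebras that are not gentle. -/
open Classical

noncomputable section

/-- A quiver with a set of monomial relations (paths that are declared to lie in the
admissible monomial ideal `I`).  `kQ/I` is the corresponding algebra. -/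
structure GQ : Type 1 where
  V : Type
  A : Type
  s : A → V
  t : A → V
  rel : List A → Prop
  rel_path : ∀ p, rel p → List.Chain' (fun a b => t a = s b) p ∧ 2 ≤ p.length

/-- Letters of strings: arrows and formal inverses of arrows. -/
inductive Letter (G : GQ) : Type
  | ar : G.A → Letter G
  | inv : G.A → Letter G

namespace Letter

variable {G : GQ}

def src : Letter G → G.V
  | .ar a => G.s a
  | .inv a => G.t a

def tgt : Letter G → G.V
  | .ar a => G.t a
  | .inv a => G.s a

def flip : Letter G → Letter G
  | .ar a => .inv a
  | .inv a => .ar a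

end Letter

/-- The formal inverse of a word. -/
def strInv {G : GQ} (w : List (Letter G)) : List (Letter G) :=
  (w.map Letter.flip).reverse

namespace GQ

variable (G : GQ)

/-- Two consecutive letters fit together and are not mutually inverse. -/
def Ok (l l' : Letter G) : Prop := l.tgt = l'.src ∧ l' ≠ l.flip

/-- `w` is a string word: consecutive letters are composable, not mutually inverse, and no
direct subword nor the inverse of a direct subword lies in the ideal `I`. -/
def IsStringWord (w : List (Letter G)) : Prop :=
  List.Chain' G.Ok w ∧
  ∀ p : List G.A, G.rel p →
    ¬ (p.map Letter.ar <:+: w) ∧ ¬ (strInv (p.map Letter.ar) <:+: w)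

/-- The end vertex of a word with specified starting vertex `s₀`. -/
def endVtx (s₀ : G.V) (w : List (Letter G)) : G.V :=
  match w.getLast? with
  | some l => l.tgt
  | none => s₀

/-- Starting vertex of a word, with default for the empty word. -/
def wordSrc (dflt : G.V) (w : List (Letter G)) : G.V :=
  match w.head? with
  | some l => l.src
  | none => dflt

/-- A string over `A = kQ/I`, given as a word together with its starting vertex
(the latter being the only data for strings of length `0`). -/
def GoodStr (s₀ : G.V) (w : List (Letter G)) : Prop :=
  G.IsStringWord w ∧ ∀ l ∈ w.head?, Letter.src l = s₀

/-- The vertex at position `n` (`0 ≤ n ≤ length w`) on the walk `w`. -/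
def vtxN (s₀ : G.V) (w : List (Letter G)) (n : ℕ) : G.V :=
  match (w.drop n).head? with
  | some l => l.src
  | none => G.endVtx s₀ w

/-- Conditions (G1) and (G2): `kQ/I` is a string algebra. -/
def IsStringAlg : Prop :=
  (∀ v : G.V, ∀ a b c : G.A, G.s a = v → G.s b = v → G.s c = v → a = b ∨ a = c ∨ b = c) ∧
  (∀ v : G.V, ∀ a b c : G.A, G.t a = v → G.t b = v → G.t c = v → a = b ∨ a = c ∨ b = c) ∧
  (∀ a b c : G.A, G.t a = G.s b → G.t a = G.s c → ¬ G.rel [a, b] → ¬ G.rel [a, c] → b = c) ∧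
  (∀ a b c : G.A, G.t b = G.s a → G.t c = G.s a → ¬ G.rel [b, a] → ¬ G.rel [c, a] → b = c)

/-- `kQ/I` is a finite-dimensional gentle algebra: (G1)-(G4) plus finiteness
of the set of paths avoiding the relations. -/
def IsGentle : Prop :=
  G.IsStringAlg ∧
  (∀ p, G.rel p → p.length = 2) ∧
  (∀ a b c : G.A, G.rel [a, b] → G.rel [a, c] → b = c) ∧
  (∀ a b c : G.A, G.rel [b, a] → G.rel [c, a] → b = c) ∧
  {p : List G.A | List.Chain' (fun a b => G.t a = G.s b) p ∧ ∀ q, G.rel q → ¬ q <:+: p}.Finite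

/-- `(D,E,F)` is a factor string of `v`. -/
def FactorTriple (v D E F : List (Letter G)) : Prop :=
  v = D ++ E ++ F ∧
  (D = [] ∨ ∃ a, D.getLast? = some (Letter.inv a)) ∧
  (F = [] ∨ ∃ a, F.head? = some (Letter.ar a))

/-- `(D,E,F)` is a substring of `w`. -/
def SubTriple (w D E F : List (Letter G)) : Prop :=
  w = D ++ E ++ F ∧
  (D = [] ∨ ∃ a, D.getLast? = some (Letter.ar a)) ∧
  (F = [] ∨ ∃ a, F.head? = some (Letter.inv a))

/-- An admissible pair `(D,E,F) × (D',E',F') ∈ F(v) × S(w)`. -/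
def AdPair (s₀v : G.V) (v : List (Letter G)) (s₀w : G.V) (w : List (Letter G))
    (D E F D' E' F' : List (Letter G)) : Prop :=
  G.FactorTriple v D E F ∧ G.SubTriple w D' E' F' ∧
  (E' = E ∨ E' = strInv E) ∧
  (E = [] → G.vtxN s₀v v D.length = G.vtxN s₀w w D'.length)

/-- A one-sided admissible pair. -/
def OneSided (D E F D' E' F' : List (Letter G)) : Prop :=
  (E' = E ∧ ((D = [] ∧ D' = []) ∨ (F = [] ∧ F' = []))) ∨
  (E' = strInv E ∧ ((D = [] ∧ F' = []) ∨ (F = [] ∧ D' = [])))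

/-- The strings `w`, `v` have extensions from `w` to `v`: (E1), (E2) or (E3). -/
def HasExt (s₀w : G.V) (w : List (Letter G)) (s₀v : G.V) (v : List (Letter G)) : Prop :=
  (∃ a : G.A, G.s a = G.endVtx s₀w w ∧
    ((G.t a = s₀v ∧ G.IsStringWord (w ++ Letter.ar a :: v)) ∨
     (G.t a = G.endVtx s₀v v ∧ G.IsStringWord (w ++ Letter.ar a :: strInv v)))) ∨
  (∃ b : G.A, G.s b = s₀w ∧
    ((G.t b = s₀v ∧ G.IsStringWord (strInv w ++ Letter.ar b :: v)) ∨
     (G.t b = G.endVtx s₀v v ∧ G.IsStringWord (strInv w ++ Letter.ar b :: strInv v)))) ∨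
  (∃ D E F D' E' F', G.AdPair s₀v v s₀w w D E F D' E' F' ∧ ¬ G.OneSided D E F D' E' F')

/-- `w` does not start on a peak iff some arrow can be added in front. -/
def StartsOnPeak (s₀ : G.V) (w : List (Letter G)) : Prop :=
  ¬ ∃ a : G.A, G.t a = s₀ ∧ G.IsStringWord (Letter.ar a :: w)

def EndsOnPeak (s₀ : G.V) (w : List (Letter G)) : Prop :=
  ¬ ∃ b : G.A, G.t b = G.endVtx s₀ w ∧ G.IsStringWord (w ++ [Letter.inv b])

def StartsInDeep (s₀ : G.V) (w : List (Letter G)) : Prop :=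
  ¬ ∃ b : G.A, G.s b = s₀ ∧ G.IsStringWord (Letter.inv b :: w)

def EndsInDeep (s₀ : G.V) (w : List (Letter G)) : Prop :=
  ¬ ∃ a : G.A, G.s a = G.endVtx s₀ w ∧ G.IsStringWord (w ++ [Letter.ar a])

def IsDirectWord (w : List (Letter G)) : Prop := ∀ l ∈ w, ∃ a, l = Letter.ar a

def IsInverseWord (w : List (Letter G)) : Prop := ∀ l ∈ w, ∃ a, l = Letter.inv a

/-- `N_a = V_a · a · U_a` is the unique string with `U_a`, `V_a` inverse strings which starts
in a deep and ends on a peak. -/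
def NCond (a : G.A) (Va Ua : List (Letter G)) : Prop :=
  G.IsInverseWord Va ∧ G.IsInverseWord Ua ∧
  G.IsStringWord (Va ++ Letter.ar a :: Ua) ∧
  G.StartsInDeep (G.wordSrc (G.s a) Va) (Va ++ Letter.ar a :: Ua) ∧
  G.EndsOnPeak (G.wordSrc (G.s a) Va) (Va ++ Letter.ar a :: Ua)

/-- A band. -/
def IsBand (s₀ : G.V) (w : List (Letter G)) : Prop :=
  G.GoodStr s₀ w ∧ w ≠ [] ∧ G.endVtx s₀ w = s₀ ∧
  (∀ n : ℕ, G.IsStringWord (List.flatten (List.replicate n w))) ∧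
  ¬ ∃ u : List (Letter G), ∃ m : ℕ, 2 ≤ m ∧ w = List.flatten (List.replicate m u)

end GQ

/-- A representation of the quiver `Q` over `k`; modules over `kQ/I` are the representations
satisfying the relations (`SatRel` below). -/
structure Repn (G : GQ) (k : Type) [Field k] : Type 1 where
  V : G.V → Type
  acg : ∀ i, AddCommGroup (V i)
  mod : ∀ i, Module k (V i)
  f : ∀ a : G.A, V (G.s a) →ₗ[k] V (G.t a)

attribute [instance] Repn.acg Repn.mod

variable {k : Type} [Field k] {G : GQ}

/-- Apply the maps of a representation along a path of arrows. -/
def Repn.appPath (R : Repn G k) : List G.A → (Σ i, R.V i) → (Σ i, R.V i)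
  | [], x => x
  | a :: p, ⟨i, x⟩ =>
      Repn.appPath R p ⟨G.t a, if h : i = G.s a then R.f a (cast (congrArg R.V h) x) else 0⟩

/-- The representation satisfies the relations, i.e. is a module over `kQ/I`. -/
def SatRel (R : Repn G k) : Prop :=
  ∀ p, G.rel p → ∀ x : Σ i, R.V i, (R.appPath p x).2 = 0

/-- Morphisms of representations. -/
structure RepHom (M N : Repn G k) : Type where
  app : ∀ i, M.V i →ₗ[k] N.V i
  comm : ∀ (a : G.A) (x : M.V (G.s a)), app (G.t a) (M.f a x) = N.f a (app (G.s a) x)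

def RepHom.comp {M N P : Repn G k} (g : RepHom N P) (f : RepHom M N) : RepHom M P where
  app i := (g.app i).comp (f.app i)
  comm a x := by
    simp only [LinearMap.comp_apply]
    rw [f.comm, g.comm]

/-- `0 → M → E → N → 0` is a short exact sequence of representations. -/
def IsSES {M E N : Repn G k} (ι : RepHom M E) (π : RepHom E N) : Prop :=
  (∀ i, Function.Injective (ι.app i)) ∧ (∀ i, Function.Surjective (π.app i)) ∧
  (∀ i, LinearMap.range (ι.app i) = LinearMap.ker (π.app i))

def Splits {E N : Repn G k} (π : RepHom E N) : Prop :=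
  ∃ σ : RepHom N E, ∀ i x, (π.app i) ((σ.app i) x) = x

/-- `Ext¹_A(M, N) ≠ 0`: there is a non-split extension `0 → N → E → M → 0` of
`A = kQ/I`-modules. -/
def Ext1Nonzero (M N : Repn G k) : Prop :=
  ∃ (E : Repn G k) (ι : RepHom N E) (π : RepHom E M),
    SatRel E ∧ IsSES ι π ∧ ¬ Splits π

def IsIso {M N : Repn G k} (φ : RepHom M N) : Prop := ∀ i, Function.Bijective (φ.app i)

def RepIso (M N : Repn G k) : Prop := ∃ φ : RepHom M N, IsIso φ

def IsZeroHom {M N : Repn G k} (φ : RepHom M N) : Prop := ∀ i x, φ.app i x = 0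

/-- Projective module over `kQ/I`. -/
def IsProjectiveRep (P : Repn G k) : Prop :=
  SatRel P ∧ ∀ (X Y : Repn G k), SatRel X → SatRel Y →
    ∀ (e : RepHom X Y), (∀ i, Function.Surjective (e.app i)) →
    ∀ (g : RepHom P Y), ∃ h : RepHom P X, ∀ i x, (e.app i) ((h.app i) x) = g.app i x

/-- Injective module over `kQ/I`. -/
def IsInjectiveRep (I : Repn G k) : Prop :=
  SatRel I ∧ ∀ (X Y : Repn G k), SatRel X → SatRel Y →
    ∀ (m : RepHom X Y), (∀ i, Function.Injective (m.app i)) →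
    ∀ (g : RepHom X I), ∃ h : RepHom Y I, ∀ i x, (h.app i) ((m.app i) x) = g.app i x

def FactorsThroughProj {M N : Repn G k} (φ : RepHom M N) : Prop :=
  ∃ (P : Repn G k) (g : RepHom M P) (h : RepHom P N), IsProjectiveRep P ∧
    ∀ i x, (h.app i) ((g.app i) x) = φ.app i x

/-- Indecomposability: nonzero, and every idempotent endomorphism is `0` or `1`. -/
def Indec (M : Repn G k) : Prop :=
  (∃ i, ∃ x : M.V i, x ≠ 0) ∧
  ∀ e : RepHom M M, (∀ i x, e.app i (e.app i x) = e.app i x) →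
    (∀ i x, e.app i x = x) ∨ (∀ i x, e.app i x = 0)

/-- Direct sum of two representations. -/
def dsum (M N : Repn G k) : Repn G k where
  V i := M.V i × N.V i
  acg _ := inferInstance
  mod _ := inferInstance
  f a := (M.f a).prodMap (N.f a)

/-- An Auslander-Reiten (almost split) sequence `0 → M → E → N → 0`. -/
def IsARSeq {M E N : Repn G k} (ι : RepHom M E) (π : RepHom E N) : Prop :=
  IsSES ι π ∧ ¬ Splits π ∧
  (∀ (Z : Repn G k), SatRel Z → ∀ g : RepHom Z N,
      (¬ ∃ σ : RepHom N Z, ∀ i x, (g.app i) ((σ.app i) x) = x) →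
      ∃ h : RepHom Z E, ∀ i x, (π.app i) ((h.app i) x) = g.app i x) ∧
  (∀ (Z : Repn G k), SatRel Z → ∀ g : RepHom M Z,
      (¬ ∃ σ : RepHom Z M, ∀ i x, (σ.app i) ((g.app i) x) = x) →
      ∃ h : RepHom E Z, ∀ i x, (h.app i) ((ι.app i) x) = g.app i x)

namespace GQ

/-- Position `p` is sent to position `q` by the arrow `a` in the string module of `w`. -/
def Link (G : GQ) (w : List (Letter G)) (a : G.A) (p q : ℕ) : Prop :=
  (∃ m : Fin w.length, w.get m = Letter.ar a ∧ p = (m : ℕ) ∧ q = (m : ℕ) + 1) ∨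
  (∃ m : Fin w.length, w.get m = Letter.inv a ∧ q = (m : ℕ) ∧ p = (m : ℕ) + 1)

end GQ

/-- The string module `M(w)` as a representation of `Q`. -/
def stringRep (k : Type) [Field k] (G : GQ) (s₀ : G.V) (w : List (Letter G)) : Repn G k where
  V i := {j : Fin (w.length + 1) // G.vtxN s₀ w (j : ℕ) = i} → k
  acg _ := inferInstance
  mod _ := inferInstance
  f a :=
    { toFun := fun x q =>
        if h : ∃ p : {j : Fin (w.length + 1) // G.vtxN s₀ w (j : ℕ) = G.s a},
            G.Link w a (p.1 : ℕ) (q.1 : ℕ)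
        then x h.choose else 0
      map_add' := by
        intro x y
        funext q
        by_cases h : ∃ p : {j : Fin (w.length + 1) // G.vtxN s₀ w (j : ℕ) = G.s a},
            G.Link w a (p.1 : ℕ) (q.1 : ℕ)
        · simp only [dif_pos h, Pi.add_apply]
        · simp only [dif_neg h, Pi.add_apply, add_zero]
      map_smul' := by
        intro c x
        funext q
        by_cases h : ∃ p : {j : Fin (w.length + 1) // G.vtxN s₀ w (j : ℕ) = G.s a},
            G.Link w a (p.1 : ℕ) (q.1 : ℕ)
        · simp only [dif_pos h, Pi.smul_apply, RingHom.id_apply, smul_eq_mul]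
        · simp only [dif_neg h, Pi.smul_apply, RingHom.id_apply, smul_zero] }

/-- The dimension vector of the string module of `w`. -/
def dimVec (G : GQ) (s₀ : G.V) (w : List (Letter G)) (i : G.V) : ℕ :=
  Nat.card {j : Fin (w.length + 1) // G.vtxN s₀ w (j : ℕ) = i}

/-- The dimension vector of a representation. -/
def repDim (M : Repn G k) (i : G.V) : ℕ := Module.finrank k (M.V i)

/-- `φ` is the canonical homomorphism `f_p : M(v) → M(w)` attached to an admissible pair
whose `E`-part sits at positions `lD, …, lD + lE` of `v` and `lD', …, lD' + lE` of `w`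
(`rev` records whether the identification reverses orientation). -/
def CanonicalApp (k : Type) [Field k] (G : GQ) (s₀v : G.V) (v : List (Letter G))
    (s₀w : G.V) (w : List (Letter G)) (lD lD' lE : ℕ) (rev : Bool)
    (φ : RepHom (stringRep k G s₀v v) (stringRep k G s₀w w)) : Prop :=
  ∀ (i : G.V) (x : (stringRep k G s₀v v).V i)
    (q : {j : Fin (w.length + 1) // G.vtxN s₀w w (j : ℕ) = i}),
    φ.app i x q =
      if h : ∃ p : {j : Fin (v.length + 1) // G.vtxN s₀v v (j : ℕ) = i},
          lD' ≤ (q.1 : ℕ) ∧ (q.1 : ℕ) ≤ lD' + lE ∧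
          (p.1 : ℕ) = (if rev then lD + (lE - ((q.1 : ℕ) - lD')) else lD + ((q.1 : ℕ) - lD'))
      then x h.choose else 0

/-- Combinatorial interface for a triangulated unpunctured marked surface `(S,M)` with a
triangulation `Γ` and the associated gentle (Jacobian) algebra `G_Γ`. -/
structure SurfData : Type 1 where
  /-- homotopy classes of non-contractible curves between marked points -/
  Curve : Type
  /-- minimal intersection numbers -/
  Int : Curve → Curve → ℕ
  Int_symm : ∀ γ δ, Int γ δ = Int δ γ
  /-- arcs = curves without self-intersections -/
  IsArc : Curve → Prop
  arc_self : ∀ γ, IsArc γ → Int γ γ = 0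
  /-- the triangulation -/
  Γ : Finset Curve
  Γ_arc : ∀ τ ∈ Γ, IsArc τ
  Γ_compat : ∀ τ ∈ Γ, ∀ τ' ∈ Γ, Int τ τ' = 0
  /-- Mosher's theorem: an arc is determined by its intersection numbers with `Γ` -/
  arc_unique : ∀ γ δ, IsArc γ → IsArc δ → (∀ τ ∈ Γ, Int γ τ = Int δ τ) → γ = δ
  /-- the triangles of `Γ` -/
  Tri : Type
  /-- the three sides of each triangle -/
  side : Tri → Fin 3 → Curve
  /-- the sequence `Δ₀^γ, …, Δ_d^γ` of triangles traversed by a curve `γ ∉ Γ` -/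
  trav : Curve → List Tri
  /-- the sequence `τ_{i_1}, …, τ_{i_d}` of arcs of `Γ` crossed by `γ` -/
  cross : Curve → List Curve
  cross_mem : ∀ γ, ∀ τ ∈ cross γ, τ ∈ Γ
  cross_sum : ∀ γ, γ ∉ Γ → (cross γ).length = ∑ τ ∈ Γ, Int γ τ
  trav_len : ∀ γ, γ ∉ Γ → (trav γ).length = (cross γ).length + 1
  /-- the restriction `γ' = γ|_{[r₁,r_d]}` intersects the initial segment `γ₀` -/
  restrMeetsStart : Curve → Prop
  /-- the restriction `γ'` intersects the final segment `γ_d` -/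
  restrMeetsEnd : Curve → Prop
  /-- the gentle Jacobian algebra `G_Γ` -/
  G : GQ
  G_gentle : G.IsGentle
  /-- vertices of `Q_Γ` are the internal arcs of `Γ` -/
  vtxArc : G.V → Curve
  vtxArc_mem : ∀ i, vtxArc i ∈ Γ
  vtxArc_inj : Function.Injective vtxArc
  /-- the string `w_Γ^γ` associated to a curve `γ ∉ Γ` -/
  strSrc : Curve → G.V
  strW : Curve → List (Letter G)
  str_good : ∀ γ, γ ∉ Γ → G.GoodStr (strSrc γ) (strW γ)
  str_dim : ∀ γ, γ ∉ Γ → ∀ i, dimVec G (strSrc γ) (strW γ) i = Int γ (vtxArc i)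
  str_surj : ∀ s₀ w, G.GoodStr s₀ w → ∃ γ, γ ∉ Γ ∧ strSrc γ = s₀ ∧ strW γ = w
  str_inj : ∀ γ δ, γ ∉ Γ → δ ∉ Γ → strW γ = strW δ → strSrc γ = strSrc δ → γ = δ

end

/-- The string algebra `kQ/⟨αβτ⟩` on the linear quiver `1 → 2 → 3 → 4`. -/
def Q2 : GQ where
  V := Fin 4
  A := Fin 3
  s a := a.castSucc
  t a := a.succ
  rel p := p = [0, 1, 2]
  rel_path := by rintro p rfl; exact ⟨List.isChain_cons_cons.mpr ⟨by decide, List.isChain_cons_cons.mpr ⟨by decide, List.isChain_singleton _⟩⟩, by decide⟩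

abbrev la0 : Letter Q2 := Letter.ar (0 : Fin 3)
abbrev la1 : Letter Q2 := Letter.ar (1 : Fin 3)
abbrev la2 : Letter Q2 := Letter.ar (2 : Fin 3)
abbrev wW : List (Letter Q2) := [la0, la1]
abbrev SS (i : Fin 4) := {j : Fin (wW.length + 1) // Q2.vtxN (0 : Fin 4) wW (j : ℕ) = i}

lemma vtxval : ∀ j : Fin 3, (Q2.vtxN (0:Fin 4) wW (j:ℕ) : Fin 4).val = j.val := by decide

instance ssub (i : Fin 4) : Subsingleton (SS i) := by
  constructor
  rintro ⟨j, hj⟩ ⟨j', hj'⟩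
  have h := congrArg Fin.val (hj.trans hj'.symm)
  rw [vtxval j, vtxval j'] at h
  exact Subtype.ext (Fin.ext h)

instance : IsEmpty (SS 3) := by
  constructor; rintro ⟨j, hj⟩
  have h := congrArg Fin.val hj
  have h3 : ((3:Fin 4):ℕ) = 3 := rfl
  rw [vtxval j, h3] at h
  have := j.isLt
  omega

def j0 : SS 0 := ⟨0, rfl⟩
def j1 : SS 1 := ⟨1, rfl⟩
def j2 : SS 2 := ⟨2, rfl⟩

variable {k : Type} [Field k]

instance acgQ2 (X : Repn Q2 k) (i : Fin 4) : AddCommGroup (X.V i) := X.acg i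
instance modQ2 (X : Repn Q2 k) (i : Fin 4) : Module k (X.V i) := X.mod i
instance ssubQ2 (i : Q2.V) : Subsingleton (SS i) := ssub i

noncomputable abbrev PP (k : Type) [Field k] := stringRep k Q2 (0 : Fin 4) wW

-- SatRel for the string module M(w)
lemma satP : SatRel (PP k) := by
  rintro p rfl ⟨i, xi⟩
  exact @Subsingleton.elim (SS (3:Fin 4) → k) _ _ _

lemma appPath_cons (X : Repn Q2 k) (a : Fin 3) (p : List (Fin 3)) (x : X.V (Q2.s a)) :
    X.appPath (a :: p) ⟨Q2.s a, x⟩ = X.appPath p ⟨Q2.t a, X.f a x⟩ := by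
  simp [Repn.appPath, cast_eq]

lemma satX (X : Repn Q2 k) (hX : SatRel X) (y : X.V (Q2.s (0:Fin 3))) :
    X.f (2:Fin 3) (X.f (1:Fin 3) (X.f (0:Fin 3) y)) = 0 := by
  have h := hX [(0:Fin 3),(1:Fin 3),(2:Fin 3)] rfl ⟨Q2.s (0:Fin 3), y⟩
  erw [appPath_cons] at h
  have h1 : (X.appPath [(1:Fin 3),(2:Fin 3)] ⟨Q2.s (1:Fin 3), X.f (0:Fin 3) y⟩).2 = 0 := h
  erw [appPath_cons] at h1
  have h2 : (X.appPath [(2:Fin 3)] ⟨Q2.s (2:Fin 3), X.f (1:Fin 3) (X.f (0:Fin 3) y)⟩).2 = 0 := h1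
  erw [appPath_cons] at h2
  exact h2

/-- generator functions -/
def gen (i : Fin 4) : (PP k).V i := fun _ => 1

lemma xeq {i : Fin 4} (q : SS i) (x : (PP k).V i) : x = x q • gen i := by
  funext p
  rw [Subsingleton.elim p q]
  change x q = x q * 1
  rw [mul_one]

lemma Pf0 (x : (PP k).V (Q2.s (0:Fin 3))) (q : SS (Q2.t (0:Fin 3))) :
    (PP k).f (0:Fin 3) x q = x j0 := by
  rw [Subsingleton.elim q (show SS (Q2.t (0:Fin 3)) from j1)]
  show (if h : ∃ p : SS (Q2.s (0:Fin 3)), Q2.Link wW (0:Fin 3) (p.1:ℕ) ((j1.1:ℕ))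
      then x h.choose else 0) = x j0
  rw [dif_pos ⟨j0, Or.inl ⟨(0 : Fin 2), rfl, rfl, rfl⟩⟩]
  exact congrArg x (Subsingleton.elim _ _)

lemma Pf1 (x : (PP k).V (Q2.s (1:Fin 3))) (q : SS (Q2.t (1:Fin 3))) :
    (PP k).f (1:Fin 3) x q = x j1 := by
  rw [Subsingleton.elim q (show SS (Q2.t (1:Fin 3)) from j2)]
  show (if h : ∃ p : SS (Q2.s (1:Fin 3)), Q2.Link wW (1:Fin 3) (p.1:ℕ) ((j2.1:ℕ))
      then x h.choose else 0) = x j1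
  rw [dif_pos ⟨j1, Or.inl ⟨(1 : Fin 2), rfl, rfl, rfl⟩⟩]
  exact congrArg x (Subsingleton.elim _ _)

lemma Pf0gen : (PP k).f (0:Fin 3) (gen (Q2.s (0:Fin 3))) = gen (Q2.t (0:Fin 3)) := by
  funext q
  rw [Pf0 (gen _) q]
  rfl

lemma Pf1gen : (PP k).f (1:Fin 3) (gen (Q2.s (1:Fin 3))) = gen (Q2.t (1:Fin 3)) := by
  funext q
  rw [Pf1 (gen _) q]
  rfl

noncomputable def liftApp (X : Repn Q2 k) (y : X.V (0:Fin 4)) :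
    ∀ i : Fin 4, ((PP k).V i) →ₗ[k] X.V i
  | ⟨0, _⟩ => (LinearMap.proj j0).smulRight y
  | ⟨1, _⟩ => (LinearMap.proj j1).smulRight (X.f (0:Fin 3) y)
  | ⟨2, _⟩ => (LinearMap.proj j2).smulRight (X.f (1:Fin 3) (X.f (0:Fin 3) y))
  | ⟨3, _⟩ => 0

lemma liftComm (X : Repn Q2 k) (hX : SatRel X) (y : X.V (0:Fin 4)) (a : Fin 3)
    (x : (PP k).V (Q2.s a)) :
    liftApp X y (Q2.t a) ((PP k).f a x) = X.f a (liftApp X y (Q2.s a) x) := by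
  obtain ⟨av, ha⟩ := a
  interval_cases av
  · show ((PP k).f (0:Fin 3) x) j1 • X.f (0:Fin 3) y = X.f (0:Fin 3) (x j0 • y)
    rw [Pf0 x j1]; exact ((X.f (0:Fin 3)).map_smul _ _).symm
  · show ((PP k).f (1:Fin 3) x) j2 • X.f (1:Fin 3) (X.f (0:Fin 3) y)
        = X.f (1:Fin 3) (x j1 • X.f (0:Fin 3) y)
    rw [Pf1 x j2]; exact ((X.f (1:Fin 3)).map_smul _ _).symm
  · show (0 : X.V (Q2.t (2:Fin 3)))
        = X.f (2:Fin 3) (x j2 • X.f (1:Fin 3) (X.f (0:Fin 3) y))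
    exact (((X.f (2:Fin 3)).map_smul _ _).trans ((congrArg (fun z => x j2 • z) (satX X hX y)).trans (smul_zero _))).symm

lemma projP : IsProjectiveRep (PP k) := by
  refine ⟨satP, ?_⟩
  intro X Y hX hY e he g
  obtain ⟨y, hy⟩ := he (0:Fin 4) (g.app (0:Fin 4) (gen (0:Fin 4)))
  refine ⟨⟨liftApp X y, liftComm X hX y⟩, ?_⟩
  intro i x
  obtain ⟨iv, hi⟩ := i
  interval_cases iv
  · show e.app (0:Fin 4) (x j0 • y) = g.app (0:Fin 4) x
    rw [map_smul, hy, ← map_smul]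
    exact congrArg _ (xeq j0 x).symm
  · show e.app (Q2.t (0:Fin 3)) (x j1 • X.f (0:Fin 3) y) = g.app (Q2.t (0:Fin 3)) x
    have hy' : e.app (Q2.s (0:Fin 3)) y = g.app (Q2.s (0:Fin 3)) (gen _) := hy
    rw [map_smul, e.comm (0:Fin 3) y, hy', ← g.comm (0:Fin 3) (gen _), Pf0gen, ← map_smul]
    exact congrArg _ (xeq j1 x).symm
  · show e.app (Q2.t (1:Fin 3)) (x j2 • X.f (1:Fin 3) (X.f (0:Fin 3) y))
        = g.app (Q2.t (1:Fin 3)) x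
    have hc0 : e.app (Q2.s (1:Fin 3)) (X.f (0:Fin 3) y)
        = Y.f (0:Fin 3) (e.app (Q2.s (0:Fin 3)) y) := e.comm (0:Fin 3) y
    have hy' : e.app (Q2.s (0:Fin 3)) y = g.app (Q2.s (0:Fin 3)) (gen _) := hy
    have hg0 : Y.f (0:Fin 3) (g.app (Q2.s (0:Fin 3)) (gen _))
        = g.app (Q2.s (1:Fin 3)) ((PP k).f (0:Fin 3) (gen _)) := (g.comm (0:Fin 3) (gen _)).symm
    have hPf0gen : (PP k).f (0:Fin 3) (gen (Q2.s (0:Fin 3))) = gen (Q2.s (1:Fin 3)) := Pf0gen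
    rw [map_smul, e.comm (1:Fin 3) (X.f (0:Fin 3) y), hc0, hy', hg0, hPf0gen,
      ← g.comm (1:Fin 3) (gen _), Pf1gen, ← map_smul]
    exact congrArg _ (xeq j2 x).symm
  · have hx : x = 0 := @Subsingleton.elim (SS (3:Fin 4) → k) _ _ _
    rw [hx]
    show e.app (3:Fin 4) (liftApp X y (3:Fin 4) 0) = g.app (3:Fin 4) 0
    rw [map_zero, map_zero, map_zero]

noncomputable def idHom (M : Repn Q2 k) : RepHom M M :=
  ⟨fun _ => LinearMap.id, fun _ _ => rfl⟩


/-- **Remark after Corollary 1.** For the string algebra `kQ/⟨αβτ⟩` (which is not gentle),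
the strings `w = αβ` and `v = βτ` admit extensions from `w` to `v`, `M(w)` is projective,
and `Ext¹(M(w), M(v)) = 0`; so Theorem 1 fails for general string algebras. -/
theorem stmt2 (k : Type) [Field k] [IsAlgClosed k] :
    Q2.IsStringAlg ∧
    Q2.HasExt (0 : Fin 4) [Letter.ar (0 : Fin 3), Letter.ar (1 : Fin 3)]
        (1 : Fin 4) [Letter.ar (1 : Fin 3), Letter.ar (2 : Fin 3)] ∧
    IsProjectiveRep (stringRep k Q2 (0 : Fin 4) [Letter.ar (0 : Fin 3), Letter.ar (1 : Fin 3)]) ∧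
    ¬ Ext1Nonzero (stringRep k Q2 (0 : Fin 4) [Letter.ar (0 : Fin 3), Letter.ar (1 : Fin 3)])
        (stringRep k Q2 (1 : Fin 4) [Letter.ar (1 : Fin 3), Letter.ar (2 : Fin 3)]) := by
  refine ⟨?_, ?_, projP, ?_⟩
  · refine ⟨fun v a b c ha hb hc => Or.inl ?_, fun v a b c ha hb hc => Or.inl ?_,
      fun a b c hab hac _ _ => ?_, fun a b c hab hac _ _ => ?_⟩
    · exact Fin.castSucc_injective _ (ha.trans hb.symm)
    · exact Fin.succ_injective _ (ha.trans hb.symm)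
    · exact Fin.castSucc_injective _ (hab.symm.trans hac)
    · exact Fin.succ_injective _ (hab.trans hac.symm)
  · refine Or.inr (Or.inr ⟨[], [la1], [la2], [la0], [la1], [],
      ⟨⟨rfl, Or.inl rfl, Or.inr ⟨(2 : Fin 3), rfl⟩⟩, ⟨rfl, Or.inr ⟨(0 : Fin 3), rfl⟩, Or.inl rfl⟩,
        Or.inl rfl, fun h => by simp at h⟩, ?_⟩)
    rintro (⟨hE, (⟨hD, hD'⟩ | ⟨hF, hF'⟩)⟩ | ⟨hE, _⟩) <;> simp [strInv, Letter.flip] at *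
  · rintro ⟨E, ι, π, hE, hses, hnsplit⟩
    obtain ⟨h, hh⟩ := projP.2 E (PP k) hE satP π hses.2.1 (idHom (PP k))
    exact hnsplit ⟨h, fun i x => hh i x⟩
end

section
/- Let A be a gentle algebra and let w, v be strings with v = V_α α v₀ for some arrow α and string v₀, where N_α = V_α α U_α is the unique string starting in a deep and ending on a peak with U_α, V_α inverse strings. Let p = (D,E,F) × (D',E',F') ∈ F(v) × S(w) be an admissible pair with DE = V_α and l(E) > 0. If either (E = E' and l(F') > 0) or (E⁻¹ = E' and l(D') > 0), then the canonical homomorphism f_p : M(v) → M(w) factors through a projective A-module. -/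
open Classical

noncomputable section

namespace L45

open GQ

variable {G : GQ}

/-! ### List helpers -/

lemma pair_infix_iff {α : Type*} (x y : α) (l : List α) :
    [x, y] <:+: l ↔ ∃ n, l[n]? = some x ∧ l[n + 1]? = some y := by
  constructor
  · rintro ⟨s, t, rfl⟩
    refine ⟨s.length, ?_, ?_⟩
    · rw [List.append_assoc, List.getElem?_append_right le_rfl]
      simp
    · rw [List.append_assoc, List.getElem?_append_right (by omega)]
      have h1 : s.length + 1 - s.length = 1 := by omega
      rw [h1]
      simp
  · rintro ⟨n, hx, hy⟩
    have hn1 : n + 1 < l.length := by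
      by_contra h
      rw [List.getElem?_eq_none (by omega)] at hy
      simp at hy
    have hn : n < l.length := by omega
    have hx' : l[n] = x := by
      have := List.getElem?_eq_getElem hn
      rw [this] at hx
      exact Option.some.inj hx
    have hy' : l[n + 1] = y := by
      have := List.getElem?_eq_getElem hn1
      rw [this] at hy
      exact Option.some.inj hy
    have h1 : l.drop n = l[n] :: l.drop (n + 1) := List.drop_eq_getElem_cons hn
    have h2 : l.drop (n + 1) = l[n + 1] :: l.drop (n + 2) := List.drop_eq_getElem_cons hn1
    refine List.IsInfix.trans (l₂ := l.drop n) ⟨[], l.drop (n + 2), ?_⟩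
      (List.drop_suffix n l).isInfix
    rw [h1, h2, hx', hy']
    rfl

/-! ### Letters -/

def toArrow : Letter G → G.A
  | .ar a => a
  | .inv a => a

@[simp] lemma toArrow_ar (a : G.A) : toArrow (Letter.ar a : Letter G) = a := rfl
@[simp] lemma toArrow_inv (a : G.A) : toArrow (Letter.inv a : Letter G) = a := rfl

lemma strInv_pair (p1 p2 : G.A) :
    strInv [Letter.ar p1, Letter.ar p2] = [Letter.inv p2, Letter.inv p1] := rfl

/-! ### basis vectors -/

variable (k : Type) [Field k]

noncomputable def bas {ι : Type*} (i : ι) : ι → k := fun j => if i = j then (1 : k) else 0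

variable {k}

lemma bas_decomp {ι : Type*} [Fintype ι] (x : ι → k) : x = ∑ i, x i • bas k i := by
  funext j
  rw [Finset.sum_apply]
  have h : ∀ i, (x i • bas k i) j = if i = j then x i else 0 := by
    intro i; by_cases h : i = j <;> simp [bas, h]
  simp only [h]
  simp

lemma linear_ext {ι : Type*} [Fintype ι] {W : Type*} [AddCommGroup W] [Module k W]
    (f g : (ι → k) →ₗ[k] W) (h : ∀ i, f (bas k i) = g (bas k i)) (x : ι → k) :
    f x = g x := by
  rw [bas_decomp (k := k) x, map_sum, map_sum]
  exact Finset.sum_congr rfl fun i _ => by rw [map_smul, map_smul, h]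

lemma bas_subtype_val {α : Type*} {P : α → Prop} (r p : {x // P x}) :
    bas k r p = if p.1 = r.1 then (1 : k) else 0 := by
  by_cases h : r = p
  · subst h; simp [bas]
  · have h2 : p.1 ≠ r.1 := fun hh => h (Subtype.ext hh.symm)
    have h3 : r ≠ p := h
    simp [bas, h2, h3]

/-! ### vtxN and Link lemmas -/

variable (s₀ : G.V) (u : List (Letter G))

lemma vtx_src {n : ℕ} (hn : n < u.length) : G.vtxN s₀ u n = (u[n]).src := by
  unfold GQ.vtxN
  rw [List.head?_drop, List.getElem?_eq_getElem hn]

lemma vtx_tgt (hc : List.Chain' G.Ok u) {n : ℕ} (hn : n < u.length) :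
    G.vtxN s₀ u (n + 1) = (u[n]).tgt := by
  by_cases h : n + 1 < u.length
  · rw [vtx_src s₀ u h]
    have := List.isChain_iff_getElem.1 hc n (by omega)
    exact this.1.symm
  · have hlen : n + 1 = u.length := by omega
    unfold GQ.vtxN GQ.endVtx
    rw [List.head?_drop, List.getElem?_eq_none (by omega), List.getLast?_eq_getElem?]
    have h2 : u.length - 1 = n := by omega
    rw [h2, List.getElem?_eq_getElem hn]

lemma link_le {e : G.A} {p q : ℕ} (h : G.Link u e p q) : p ≤ u.length ∧ q ≤ u.length := by
  rcases h with ⟨m, _, rfl, rfl⟩ | ⟨m, _, rfl, rfl⟩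
  · exact ⟨le_of_lt m.isLt, m.isLt⟩
  · exact ⟨m.isLt, le_of_lt m.isLt⟩

lemma link_vtx (hc : List.Chain' G.Ok u) {e : G.A} {p q : ℕ} (h : G.Link u e p q) :
    G.vtxN s₀ u p = G.s e ∧ G.vtxN s₀ u q = G.t e := by
  rcases h with ⟨m, hm, rfl, rfl⟩ | ⟨m, hm, rfl, rfl⟩ <;>
    rw [List.get_eq_getElem] at hm
  · constructor
    · rw [vtx_src s₀ u m.isLt, hm]; rfl
    · rw [vtx_tgt s₀ u hc m.isLt, hm]; rfl
  · constructor
    · rw [vtx_tgt s₀ u hc m.isLt, hm]; rfl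
    · rw [vtx_src s₀ u m.isLt, hm]; rfl

lemma ok_get (hc : List.Chain' G.Ok u) {n : ℕ} (hn : n + 1 < u.length) :
    G.Ok u[n] u[n + 1] := by
  have := List.isChain_iff_getElem.1 hc n (by omega)
  simpa using this

lemma ok_nat (hc : List.Chain' G.Ok u) {n n' : ℕ} (hn' : n' < u.length) (heq : n' = n + 1) :
    G.Ok (u[n]'(by omega)) (u[n']'hn') := by
  subst heq
  exact ok_get u hc hn'

lemma link_uniq_p (hc : List.Chain' G.Ok u) {e : G.A} {p p' q : ℕ}
    (h : G.Link u e p q) (h' : G.Link u e p' q) : p = p' := by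
  rcases h with ⟨m, hm, rfl, rfl⟩ | ⟨m, hm, rfl, rfl⟩ <;>
    rcases h' with ⟨m', hm', rfl, he⟩ | ⟨m', hm', he, rfl⟩ <;>
    rw [List.get_eq_getElem] at hm hm'
  · omega
  · -- u[m] = ar e with q = m+1 ; u[m'] = inv e with q = m' : m' = m+1
    exfalso
    have h2 := ok_nat u hc m'.isLt (show (m' : ℕ) = (m : ℕ) + 1 by omega)
    rw [hm, hm'] at h2
    exact h2.2 rfl
  · exfalso
    have h2 := ok_nat u hc m.isLt (show (m : ℕ) = (m' : ℕ) + 1 by omega)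
    rw [hm, hm'] at h2
    exact h2.2 rfl
  · have : (m : ℕ) = (m' : ℕ) := by omega
    omega

lemma link_uniq_q (hc : List.Chain' G.Ok u) {e : G.A} {p q q' : ℕ}
    (h : G.Link u e p q) (h' : G.Link u e p q') : q = q' := by
  rcases h with ⟨m, hm, rfl, rfl⟩ | ⟨m, hm, rfl, rfl⟩ <;>
    rcases h' with ⟨m', hm', he, rfl⟩ | ⟨m', hm', rfl, he⟩ <;>
    rw [List.get_eq_getElem] at hm hm'
  · omega
  · -- u[m] = ar e, p = m ; u[m'] = inv e, p = m'+1 : m = m'+1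
    exfalso
    have h2 := ok_nat u hc m.isLt (show (m : ℕ) = (m' : ℕ) + 1 by omega)
    rw [hm, hm'] at h2
    exact h2.2 rfl
  · exfalso
    have h2 := ok_nat u hc m'.isLt (show (m' : ℕ) = (m : ℕ) + 1 by omega)
    rw [hm, hm'] at h2
    exact h2.2 rfl
  · have : (m : ℕ) = (m' : ℕ) := by omega
    omega

/-- `Link` composable pairs never form a relation (since `u` is a string word). -/
lemma no_rel_links (hu : G.IsStringWord u) {p1 p2 : G.A} (hrel : G.rel [p1, p2])
    {n1 n2 n3 : ℕ} (h1 : G.Link u p1 n1 n2) (h2 : G.Link u p2 n2 n3) : False := by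
  rcases h1 with ⟨m, hm, rfl, rfl⟩ | ⟨m, hm, rfl, rfl⟩ <;>
    rcases h2 with ⟨m', hm', he, rfl⟩ | ⟨m', hm', rfl, he⟩ <;>
    rw [List.get_eq_getElem] at hm hm'
  · -- u[m] = ar p1, u[m'] = ar p2, m' = m+1 : direct infix
    refine (hu.2 [p1, p2] hrel).1 ?_
    show [Letter.ar p1, Letter.ar p2] <:+: u
    rw [pair_infix_iff]
    refine ⟨(m : ℕ), ?_, ?_⟩
    · rw [List.getElem?_eq_getElem m.isLt, hm]
    · have : (m : ℕ) + 1 = (m' : ℕ) := by omega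
      rw [this, List.getElem?_eq_getElem m'.isLt, hm']
  · -- u[m] = ar p1 with n2 = m+1; u[m'] = inv p2 with n2 = m'+1 : m = m'
    have hmm : (m : ℕ) = (m' : ℕ) := by omega
    have : m = m' := Fin.ext hmm
    subst this
    rw [hm] at hm'
    exact nomatch hm'
  · -- u[m] = inv p1, n2 = m ; u[m'] = ar p2, n2 = m' : m = m'
    have hmm : (m : ℕ) = (m' : ℕ) := by omega
    have : m = m' := Fin.ext hmm
    subst this
    rw [hm] at hm'
    exact nomatch hm'
  · -- u[m] = inv p1 with n2 = m; u[m'] = inv p2 with n2 = m'+1 : m = m'+1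
    refine (hu.2 [p1, p2] hrel).2 ?_
    show [Letter.inv p2, Letter.inv p1] <:+: u
    rw [pair_infix_iff]
    refine ⟨(m' : ℕ), ?_, ?_⟩
    · rw [List.getElem?_eq_getElem m'.isLt, hm']
    · have : (m' : ℕ) + 1 = (m : ℕ) := by omega
      rw [this, List.getElem?_eq_getElem m.isLt, hm]

end L45

end
noncomputable section

namespace L45

open GQ

variable {G : GQ} {k : Type} [Field k]

/-! ### appPath generalities -/

lemma appPath_nil (X : Repn G k) (σ : Σ i, X.V i) : X.appPath [] σ = σ := rfl

lemma appPath_cons (X : Repn G k) (a : G.A) (p : List G.A) (i : G.V) (x : X.V i) :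
    X.appPath (a :: p) ⟨i, x⟩ =
      X.appPath p ⟨G.t a, if h : i = G.s a then X.f a (cast (congrArg X.V h) x) else 0⟩ := rfl

lemma appPath_append (X : Repn G k) (p q : List G.A) (σ : Σ i, X.V i) :
    X.appPath (p ++ q) σ = X.appPath q (X.appPath p σ) := by
  induction p generalizing σ with
  | nil => rfl
  | cons a p ih =>
      obtain ⟨i, x⟩ := σ
      rw [List.cons_append, appPath_cons, appPath_cons, ih]

lemma appPath_single_fst (X : Repn G k) (e : G.A) (σ : Σ i, X.V i) :
    (X.appPath [e] σ).1 = G.t e := by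
  obtain ⟨i, x⟩ := σ
  rfl

lemma cast_zero_rep (X : Repn G k) {i j : G.V} (h : i = j) :
    cast (congrArg X.V h) (0 : X.V i) = 0 := by subst h; rfl

lemma appPath_single_mk (X : Repn G k) (e : G.A) (j : G.V) (y : X.V j) :
    X.appPath [e] ⟨j, y⟩ =
      ⟨G.t e, if h : j = G.s e then X.f e (cast (congrArg X.V h) y) else 0⟩ := rfl

lemma appPath_single_zero (X : Repn G k) (e : G.A) (j : G.V) :
    (X.appPath [e] ⟨j, (0 : X.V j)⟩).2 = 0 := by
  rw [appPath_single_mk]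
  show (if h : j = G.s e then X.f e (cast (congrArg X.V h) (0 : X.V j)) else 0) = 0
  by_cases h : j = G.s e
  · rw [dif_pos h, cast_zero_rep X h, map_zero]
  · rw [dif_neg h]

/-! ### projV -/

def projV (X : Repn G k) (j : G.V) (σ : Σ i, X.V i) : X.V j :=
  if h : σ.1 = j then cast (congrArg X.V h) σ.2 else 0

lemma projV_mk (X : Repn G k) (j : G.V) (y : X.V j) : projV X j ⟨j, y⟩ = y := by
  unfold projV
  rw [dif_pos rfl]
  exact cast_eq _ y

lemma projV_of_zero (X : Repn G k) (j : G.V) (σ : Σ i, X.V i) (h : σ.2 = 0) :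
    projV X j σ = 0 := by
  unfold projV
  by_cases h1 : σ.1 = j
  · rw [dif_pos h1, h]
    exact cast_zero_rep X h1
  · rw [dif_neg h1]

lemma snd_zero_of_projV (X : Repn G k) (σ : Σ i, X.V i) (h : projV X σ.1 σ = 0) :
    σ.2 = 0 := by
  unfold projV at h
  rw [dif_pos rfl, cast_eq] at h
  exact h

lemma projV_fstep (X : Repn G k) (e : G.A) (τ : Σ i, X.V i) (hτ : τ.1 = G.s e) :
    projV X (G.t e) (X.appPath [e] τ) = X.f e (projV X (G.s e) τ) := by
  obtain ⟨j, y⟩ := τ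
  subst hτ
  have h1 : X.appPath [e] (⟨G.s e, y⟩ : Σ i, X.V i) = ⟨G.t e, X.f e y⟩ := by
    rw [appPath_single_mk, dif_pos rfl]
    rfl
  rw [h1, projV_mk, projV_mk]

lemma projV_fstep_ne (X : Repn G k) (e : G.A) (τ : Σ i, X.V i) (hτ : τ.1 ≠ G.s e) :
    projV X (G.t e) (X.appPath [e] τ) = 0 := by
  obtain ⟨j, y⟩ := τ
  have h1 : X.appPath [e] (⟨j, y⟩ : Σ i, X.V i) = ⟨G.t e, 0⟩ := by
    rw [appPath_single_mk, dif_neg hτ]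
  rw [h1]
  exact projV_of_zero X _ _ rfl

lemma projV_fstep_rel (X : Repn G k) (hX : SatRel X) {z e : G.A} (hrel : G.rel [z, e])
    (σ : Σ i, X.V i) (hend : G.t z = G.s e) :
    X.f e (projV X (G.s e) (X.appPath [z] σ)) = 0 := by
  have h0 := hX [z, e] hrel σ
  rw [show ([z, e] : List G.A) = [z] ++ [e] from rfl, appPath_append] at h0
  have hτ1 : (X.appPath [z] σ).1 = G.t z := appPath_single_fst X z σ
  generalize hg : X.appPath [z] σ = τ at *
  obtain ⟨j, y⟩ := τ
  subst hτ1
  have h2 : X.appPath [e] (⟨G.t z, y⟩ : Σ i, X.V i) =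
      ⟨G.t e, X.f e (cast (congrArg X.V hend) y)⟩ := by
    rw [appPath_single_mk, dif_pos hend]
  rw [h2] at h0
  have h3 : projV X (G.s e) (⟨G.t z, y⟩ : Σ i, X.V i) = cast (congrArg X.V hend) y := by
    unfold projV
    rw [dif_pos hend]
  rw [h3]
  exact h0

/-- A representation satisfies the (length-two) relations as soon as the corresponding
composites of its maps vanish. -/
lemma satrel_two (X : Repn G k) (hlen2 : ∀ p, G.rel p → p.length = 2)
    (hcomp : ∀ p1 p2 : G.A, G.rel [p1, p2] →
      ∀ y : X.V (G.s p1), X.f p2 (projV X (G.s p2) ⟨G.t p1, X.f p1 y⟩) = 0) :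
    SatRel X := by
  intro p hp σ
  obtain ⟨p1, p2, rfl⟩ := List.length_eq_two.1 (hlen2 p hp)
  obtain ⟨i, x⟩ := σ
  rw [show ([p1, p2] : List G.A) = [p1] ++ [p2] from rfl, appPath_append]
  by_cases h01 : i = G.s p1
  · subst h01
    have h1 : X.appPath [p1] (⟨G.s p1, x⟩ : Σ i, X.V i) = ⟨G.t p1, X.f p1 x⟩ := by
      rw [appPath_single_mk, dif_pos rfl]
      rfl
    rw [h1]
    by_cases h12 : G.t p1 = G.s p2
    · have h2 : X.appPath [p2] (⟨G.t p1, X.f p1 x⟩ : Σ i, X.V i) =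
          ⟨G.t p2, X.f p2 (cast (congrArg X.V h12) (X.f p1 x))⟩ := by
        rw [appPath_single_mk, dif_pos h12]
      rw [h2]
      show X.f p2 (cast (congrArg X.V h12) (X.f p1 x)) = 0
      have h3 : cast (congrArg X.V h12) (X.f p1 x) =
          projV X (G.s p2) ⟨G.t p1, X.f p1 x⟩ := by
        unfold projV
        rw [dif_pos h12]
      rw [h3]
      exact hcomp p1 p2 hp x
    · have h2 : X.appPath [p2] (⟨G.t p1, X.f p1 x⟩ : Σ i, X.V i) = ⟨G.t p2, 0⟩ := by
        rw [appPath_single_mk, dif_neg h12]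
      rw [h2]
  · have h1 : X.appPath [p1] (⟨i, x⟩ : Σ i, X.V i) = ⟨G.t p1, 0⟩ := by
      rw [appPath_single_mk, dif_neg h01]
    rw [h1]
    exact appPath_single_zero X p2 (G.t p1)

/-! ### stringRep evaluation -/

section SR

variable (s₀ : G.V) (u : List (Letter G))

lemma SRf_apply (a : G.A) (x : (stringRep k G s₀ u).V (G.s a))
    (q : {j : Fin (u.length + 1) // G.vtxN s₀ u (j : ℕ) = G.t a}) :
    (stringRep k G s₀ u).f a x q =
      if h : ∃ p : {j : Fin (u.length + 1) // G.vtxN s₀ u (j : ℕ) = G.s a},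
          G.Link u a (p.1 : ℕ) (q.1 : ℕ) then x h.choose else 0 := rfl

lemma cast_eval_sr {i j : G.V} (h : i = j) (x : (stringRep k G s₀ u).V i)
    (q : {j' : Fin (u.length + 1) // G.vtxN s₀ u (j' : ℕ) = j}) :
    cast (congrArg (stringRep k G s₀ u).V h) x q = x ⟨q.1, q.2.trans h.symm⟩ := by
  subst h
  rfl

lemma SRf_bas_eval (hc : List.Chain' G.Ok u) {a : G.A} {n n' : ℕ} (hL : G.Link u a n n')
    (x : (stringRep k G s₀ u).V (G.s a))
    (hx : ∀ p : {j : Fin (u.length + 1) // G.vtxN s₀ u (j : ℕ) = G.s a},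
      x p = if (p.1 : ℕ) = n then (1 : k) else 0)
    (q : {j : Fin (u.length + 1) // G.vtxN s₀ u (j : ℕ) = G.t a}) :
    (stringRep k G s₀ u).f a x q = if (q.1 : ℕ) = n' then (1 : k) else 0 := by
  rw [SRf_apply]
  by_cases hq : (q.1 : ℕ) = n'
  · have hL' : G.Link u a n (q.1 : ℕ) := by rw [hq]; exact hL
    have hex : ∃ p : {j : Fin (u.length + 1) // G.vtxN s₀ u (j : ℕ) = G.s a},
        G.Link u a (p.1 : ℕ) (q.1 : ℕ) :=
      ⟨⟨⟨n, by have := (link_le u hL).1; omega⟩, (link_vtx s₀ u hc hL).1⟩, hL'⟩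
    have hch : ((hex.choose.1 : Fin (u.length + 1)) : ℕ) = n :=
      link_uniq_p u hc hex.choose_spec hL'
    rw [dif_pos hex, hx, if_pos hch, if_pos hq]
  · rw [if_neg hq]
    by_cases hex : ∃ p : {j : Fin (u.length + 1) // G.vtxN s₀ u (j : ℕ) = G.s a},
        G.Link u a (p.1 : ℕ) (q.1 : ℕ)
    · rw [dif_pos hex, hx, if_neg]
      intro hcn
      have hL2 : G.Link u a n (q.1 : ℕ) := by rw [← hcn]; exact hex.choose_spec
      exact hq (link_uniq_q u hc hL2 hL)
    · rw [dif_neg hex]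

lemma SRf_eval_zero {a : G.A} {n : ℕ}
    (hno : ∀ q', ¬ G.Link u a n q')
    (x : (stringRep k G s₀ u).V (G.s a))
    (hx : ∀ p : {j : Fin (u.length + 1) // G.vtxN s₀ u (j : ℕ) = G.s a},
      x p = if (p.1 : ℕ) = n then (1 : k) else 0)
    (q : {j : Fin (u.length + 1) // G.vtxN s₀ u (j : ℕ) = G.t a}) :
    (stringRep k G s₀ u).f a x q = 0 := by
  rw [SRf_apply]
  by_cases hex : ∃ p : {j : Fin (u.length + 1) // G.vtxN s₀ u (j : ℕ) = G.s a},
      G.Link u a (p.1 : ℕ) (q.1 : ℕ)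
  · rw [dif_pos hex, hx, if_neg]
    intro hcn
    have hL2 : G.Link u a n (q.1 : ℕ) := by rw [← hcn]; exact hex.choose_spec
    exact hno _ hL2
  · rw [dif_neg hex]

lemma satrel_stringRep (hu : G.IsStringWord u) (hlen2 : ∀ p, G.rel p → p.length = 2) :
    SatRel (stringRep k G s₀ u) := by
  refine satrel_two _ hlen2 ?_
  intro p1 p2 hp y
  by_cases h12 : G.t p1 = G.s p2
  · have h3 : projV (stringRep k G s₀ u) (G.s p2) ⟨G.t p1, (stringRep k G s₀ u).f p1 y⟩ =
        cast (congrArg (stringRep k G s₀ u).V h12) ((stringRep k G s₀ u).f p1 y) := by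
      unfold projV
      rw [dif_pos h12]
    rw [h3]
    funext q
    rw [SRf_apply]
    by_cases hex : ∃ pm : {j : Fin (u.length + 1) // G.vtxN s₀ u (j : ℕ) = G.s p2},
        G.Link u p2 (pm.1 : ℕ) (q.1 : ℕ)
    · rw [dif_pos hex, cast_eval_sr s₀ u h12, SRf_apply, dif_neg]
      · show (0 : k) = 0
        rfl
      intro hex2
      exact no_rel_links u hu hp hex2.choose_spec hex.choose_spec
    · rw [dif_neg hex]
      show (0 : k) = 0
      rfl
  · have h3 : projV (stringRep k G s₀ u) (G.s p2) ⟨G.t p1, (stringRep k G s₀ u).f p1 y⟩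
        = 0 := by
      unfold projV
      rw [dif_neg h12]
    rw [h3, map_zero]

end SR

end L45

end

noncomputable section

namespace L45

open GQ

variable {G : GQ} {k : Type} [Field k]

/-! ### paths avoiding relations, and the projective `P(i0)` -/

def pEnd (i0 : G.V) (r : List G.A) : G.V := ((r.getLast?).map G.t).getD i0

def PValid (i0 : G.V) (r : List G.A) : Prop :=
  (∀ l ∈ r.head?, G.s l = i0) ∧ List.Chain' (fun a b => G.t a = G.s b) r ∧
    ∀ q, G.rel q → ¬ q <:+: r

abbrev PPath (i0 j : G.V) : Type := {r : List G.A // PValid i0 r ∧ pEnd i0 r = j}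

lemma pEnd_nil (i0 : G.V) : pEnd (G := G) i0 [] = i0 := rfl

lemma pEnd_concat (i0 : G.V) (r : List G.A) (e : G.A) : pEnd i0 (r ++ [e]) = G.t e := by
  unfold pEnd
  rw [List.getLast?_concat]
  rfl

lemma valid_nil (i0 : G.V) : PValid (G := G) i0 [] := by
  refine ⟨by simp, List.isChain_nil, fun q hq hinf => ?_⟩
  have h2 := (G.rel_path q hq).2
  rw [List.infix_nil] at hinf
  subst hinf
  simp at h2

lemma valid_of_concat {i0 : G.V} {r : List G.A} {e : G.A} (h : PValid i0 (r ++ [e])) :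
    PValid i0 r ∧ pEnd i0 r = G.s e := by
  obtain ⟨hh, hc, hr⟩ := h
  have hc2 := List.isChain_append.1 hc
  constructor
  · refine ⟨?_, hc2.1, fun q hq hinf => hr q hq (hinf.trans ⟨[], [e], by simp⟩)⟩
    intro l hl
    apply hh
    cases r with
    | nil => simp at hl
    | cons x r' => simpa using hl
  · cases hr0 : r.getLast? with
    | none =>
        have hre : r = [] := List.getLast?_eq_none_iff.1 hr0
        subst hre
        exact (hh e (by simp)).symm
    | some z =>
        have := hc2.2.2 z hr0 e (by simp)
        unfold pEnd
        rw [hr0]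
        exact this

lemma norel_of_concat {i0 : G.V} {r : List G.A} {e : G.A} (h : PValid i0 (r ++ [e])) :
    ∀ z, r.getLast? = some z → ¬ G.rel [z, e] := by
  intro z hz hrel
  refine h.2.2 [z, e] hrel ?_
  rw [pair_infix_iff]
  obtain ⟨r', rfl⟩ := List.getLast?_eq_some_iff.1 hz
  refine ⟨r'.length, ?_, ?_⟩
  · rw [List.append_assoc, List.getElem?_append_right le_rfl]
    simp
  · rw [List.append_assoc, List.getElem?_append_right (by omega)]
    have h1 : r'.length + 1 - r'.length = 1 := by omega
    rw [h1]
    simp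

lemma valid_extend (hlen2 : ∀ p, G.rel p → p.length = 2) {i0 : G.V} {r : List G.A} {e : G.A}
    (h : PValid i0 r) (hend : pEnd i0 r = G.s e)
    (hnz : ∀ z, r.getLast? = some z → ¬ G.rel [z, e]) : PValid i0 (r ++ [e]) := by
  refine ⟨?_, ?_, ?_⟩
  · intro l hl
    cases r with
    | nil =>
        simp at hl
        subst hl
        exact hend.symm
    | cons x r' => exact h.1 l (by simpa using hl)
  · refine List.isChain_append.2 ?_
    refine ⟨h.2.1, List.isChain_singleton e, ?_⟩
    intro x hx y hy
    simp at hy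
    subst hy
    have hpe : pEnd i0 r = G.t x := by
      unfold pEnd
      rw [hx]
      rfl
    exact hpe.symm.trans hend
  · intro q hq hinf
    obtain ⟨q1, q2, rfl⟩ := List.length_eq_two.1 (hlen2 q hq)
    rw [pair_infix_iff] at hinf
    obtain ⟨n, h1, h2⟩ := hinf
    have hlen : n + 1 < r.length + 1 := by
      by_contra hh
      rw [List.getElem?_eq_none (by simp; omega)] at h2
      simp at h2
    by_cases hn : n + 1 < r.length
    · refine h.2.2 [q1, q2] hq ?_
      rw [pair_infix_iff]
      refine ⟨n, ?_, ?_⟩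
      · rw [← h1, List.getElem?_append_left (by omega)]
      · rw [← h2, List.getElem?_append_left hn]
    · have hn1 : n + 1 = r.length := by omega
      have hq2 : q2 = e := by
        rw [List.getElem?_append_right (by omega), hn1] at h2
        simp at h2
        exact h2.symm
      have hq1 : r.getLast? = some q1 := by
        rw [List.getElem?_append_left (by omega)] at h1
        rw [List.getLast?_eq_getElem?, show r.length - 1 = n by omega]
        exact h1
      rw [hq2] at hq
      exact hnz q1 hq1 hq

variable (k) in
@[reducible] def ProjRep (i0 : G.V) : Repn G k where
  V j := PPath i0 j → k
  acg _ := inferInstance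
  mod _ := inferInstance
  f a :=
    { toFun := fun x r =>
        if h : ∃ r' : PPath i0 (G.s a), r.1 = r'.1 ++ [a] then x h.choose else 0
      map_add' := by
        intro x y
        funext r
        by_cases h : ∃ r' : PPath i0 (G.s a), r.1 = r'.1 ++ [a]
        · simp only [dif_pos h, Pi.add_apply]
        · simp only [dif_neg h, Pi.add_apply, add_zero]
      map_smul' := by
        intro c x
        funext r
        by_cases h : ∃ r' : PPath i0 (G.s a), r.1 = r'.1 ++ [a]
        · simp only [dif_pos h, Pi.smul_apply, RingHom.id_apply, smul_eq_mul]
        · simp only [dif_neg h, Pi.smul_apply, RingHom.id_apply, smul_zero] }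

lemma Pf_apply {i0 : G.V} (a : G.A) (x : (ProjRep k i0).V (G.s a)) (r : PPath i0 (G.t a)) :
    (ProjRep k i0).f a x r =
      if h : ∃ r' : PPath i0 (G.s a), r.1 = r'.1 ++ [a] then x h.choose else 0 := rfl

lemma cast_eval_proj {i0 i j : G.V} (h : i = j) (x : (ProjRep k i0).V i) (r : PPath i0 j) :
    cast (congrArg (ProjRep k i0).V h) x r = x ⟨r.1, r.2.1, r.2.2.trans h.symm⟩ := by
  subst h
  rfl

lemma Pf_bas {i0 : G.V} (a : G.A) (r' : PPath i0 (G.s a)) (r : PPath i0 (G.t a)) :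
    (ProjRep k i0).f a (bas k r') r = if r.1 = r'.1 ++ [a] then (1 : k) else 0 := by
  rw [Pf_apply]
  by_cases h : ∃ r₂ : PPath i0 (G.s a), r.1 = r₂.1 ++ [a]
  · rw [dif_pos h]
    by_cases hr : r.1 = r'.1 ++ [a]
    · rw [if_pos hr]
      have hs2 : h.choose.1 ++ [a] = r'.1 ++ [a] := h.choose_spec.symm.trans hr
      have h3 := congrArg List.dropLast hs2
      rw [List.dropLast_concat, List.dropLast_concat] at h3
      have h4 : h.choose = r' := Subtype.ext h3
      rw [h4]
      exact if_pos rfl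
    · rw [if_neg hr]
      have h4 : r' ≠ h.choose := by
        intro heq
        exact hr (by rw [h.choose_spec, ← heq])
      exact if_neg h4
  · rw [dif_neg h, if_neg]
    intro hr
    exact h ⟨r', hr⟩

lemma satrel_proj (hlen2 : ∀ p, G.rel p → p.length = 2) (i0 : G.V) :
    SatRel (ProjRep k i0) := by
  refine satrel_two _ hlen2 ?_
  intro p1 p2 hp y
  by_cases h12 : G.t p1 = G.s p2
  · have h3 : projV (ProjRep k i0) (G.s p2) ⟨G.t p1, (ProjRep k i0).f p1 y⟩ =
        cast (congrArg (ProjRep k i0).V h12) ((ProjRep k i0).f p1 y) := by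
      unfold projV
      rw [dif_pos h12]
    rw [h3]
    funext r
    rw [Pf_apply]
    by_cases hex : ∃ r₂ : PPath i0 (G.s p2), r.1 = r₂.1 ++ [p2]
    · rw [dif_pos hex, cast_eval_proj h12, Pf_apply, dif_neg]
      · show (0 : k) = 0
        rfl
      intro hex2
      refine r.2.1.2.2 [p1, p2] hp ?_
      refine ⟨hex2.choose.1, [], ?_⟩
      rw [List.append_nil]
      exact ((hex.choose_spec.trans (congrArg (· ++ [p2]) hex2.choose_spec)).trans
        (List.append_assoc _ _ _)).symm
    · rw [dif_neg hex]
      show (0 : k) = 0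
      rfl
  · have h3 : projV (ProjRep k i0) (G.s p2) ⟨G.t p1, (ProjRep k i0).f p1 y⟩ = 0 := by
      unfold projV
      rw [dif_neg h12]
    rw [h3, map_zero]

end L45

end
noncomputable section

namespace L45

open GQ

variable {G : GQ} {k : Type} [Field k]

/-! ### the canonical homomorphism out of `P(i0)` -/

variable (k) in
def CHapp {i0 : G.V} (hfin : ∀ j : G.V, Fintype (PPath i0 j))
    (X : Repn G k) (ξ : X.V i0) (j : G.V) : (ProjRep k i0).V j →ₗ[k] X.V j :=
  letI := hfin j
  { toFun := fun x => ∑ r : PPath i0 j, x r • projV X j (X.appPath r.1 ⟨i0, ξ⟩)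
    map_add' := by
      intro x y
      rw [← Finset.sum_add_distrib]
      exact Finset.sum_congr rfl fun r _ => by rw [Pi.add_apply, add_smul]
    map_smul' := by
      intro c x
      rw [RingHom.id_apply, Finset.smul_sum]
      exact Finset.sum_congr rfl fun r _ => by
        rw [Pi.smul_apply, smul_eq_mul, mul_smul] }

lemma CHapp_bas {i0 : G.V} (hfin : ∀ j : G.V, Fintype (PPath i0 j))
    (X : Repn G k) (ξ : X.V i0) (j : G.V) (r : PPath i0 j) :
    CHapp k hfin X ξ j (bas k r) = projV X j (X.appPath r.1 ⟨i0, ξ⟩) := by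
  letI := hfin j
  show (∑ r' : PPath i0 j, bas k r r' • projV X j (X.appPath r'.1 ⟨i0, ξ⟩)) = _
  rw [Finset.sum_eq_single r]
  · rw [show bas k r r = 1 from by unfold bas; rw [if_pos rfl], one_smul]
  · intro b _ hb
    rw [show bas k r b = 0 from by unfold bas; rw [if_neg (by exact fun h => hb h.symm)],
      zero_smul]
  · intro h
    exact absurd (Finset.mem_univ r) h

lemma appPath_fst_pEnd (X : Repn G k) (i0 : G.V) (r : List G.A) (x : X.V i0) :
    (X.appPath r ⟨i0, x⟩).1 = pEnd i0 r := by
  rcases List.eq_nil_or_concat r with rfl | ⟨r₀, e, hre⟩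
  · rfl
  · rw [hre, List.concat_eq_append, appPath_append, pEnd_concat]
    exact appPath_single_fst X e _

lemma Pf_bas_valid {i0 : G.V} (a : G.A) (r' : PPath i0 (G.s a))
    (hval : PValid i0 (r'.1 ++ [a])) :
    (ProjRep k i0).f a (bas k r') =
      bas k (⟨r'.1 ++ [a], hval, pEnd_concat i0 r'.1 a⟩ : PPath i0 (G.t a)) := by
  funext r
  rw [Pf_bas]
  by_cases h : r.1 = r'.1 ++ [a]
  · rw [if_pos h]
    have h4 : (⟨r'.1 ++ [a], hval, pEnd_concat i0 r'.1 a⟩ : PPath i0 (G.t a)) = r :=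
      Subtype.ext h.symm
    rw [h4]
    exact (if_pos rfl).symm
  · rw [if_neg h]
    have h4 : (⟨r'.1 ++ [a], hval, pEnd_concat i0 r'.1 a⟩ : PPath i0 (G.t a)) ≠ r :=
      fun heq => h (congrArg Subtype.val heq).symm
    exact (if_neg h4).symm

lemma Pf_bas_invalid {i0 : G.V} (a : G.A) (r' : PPath i0 (G.s a))
    (hval : ¬ PValid i0 (r'.1 ++ [a])) :
    (ProjRep k i0).f a (bas k r') = 0 := by
  funext r
  rw [Pf_bas, if_neg]
  · rfl
  · intro hr
    exact hval (by rw [← hr]; exact r.2.1)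

lemma CH_comm {i0 : G.V} (hfin : ∀ j : G.V, Fintype (PPath i0 j))
    (X : Repn G k) (hX : SatRel X) (hlen2 : ∀ p, G.rel p → p.length = 2) (ξ : X.V i0)
    (a : G.A) (x : (ProjRep k i0).V (G.s a)) :
    CHapp k hfin X ξ (G.t a) ((ProjRep k i0).f a x) =
      X.f a (CHapp k hfin X ξ (G.s a) x) := by
  letI := hfin (G.s a)
  refine linear_ext ((CHapp k hfin X ξ (G.t a)).comp ((ProjRep k i0).f a))
    ((X.f a).comp (CHapp k hfin X ξ (G.s a))) ?_ x
  intro r'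
  show CHapp k hfin X ξ (G.t a) ((ProjRep k i0).f a (bas k r')) =
    X.f a (CHapp k hfin X ξ (G.s a) (bas k r'))
  rw [CHapp_bas]
  by_cases hval : PValid i0 (r'.1 ++ [a])
  · rw [Pf_bas_valid a r' hval, CHapp_bas]
    show projV X (G.t a) (X.appPath (r'.1 ++ [a]) ⟨i0, ξ⟩) = _
    rw [appPath_append]
    refine projV_fstep X a _ ?_
    rw [appPath_fst_pEnd]
    exact r'.2.2
  · have hexz : ∃ z, r'.1.getLast? = some z ∧ G.rel [z, a] := by
      by_contra hno
      push_neg at hno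
      exact hval (valid_extend hlen2 r'.2.1 r'.2.2 hno)
    obtain ⟨z, hz, hrel⟩ := hexz
    obtain ⟨r₀, hr'⟩ := List.getLast?_eq_some_iff.1 hz
    rw [Pf_bas_invalid a r' hval, map_zero]
    have hend : G.t z = G.s a := by
      have h5 := r'.2.2
      rw [hr', pEnd_concat] at h5
      exact h5
    rw [show r'.1 = r₀ ++ [z] from hr', appPath_append]
    exact (projV_fstep_rel X hX hrel _ hend).symm

lemma rephom_eq_CH {i0 : G.V} {Y : Repn G k} (hlen2 : ∀ p, G.rel p → p.length = 2)
    (ψ : RepHom (ProjRep k i0) Y) (l : List G.A) :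
    ∀ (j : G.V) (h : PValid i0 l ∧ pEnd i0 l = j),
      ψ.app j (bas k ⟨l, h⟩) =
        projV Y j (Y.appPath l ⟨i0, ψ.app i0 (bas k ⟨[], valid_nil i0, rfl⟩)⟩) := by
  induction l using List.reverseRecOn with
  | nil =>
      intro j h
      have h2 := h.2
      rw [pEnd_nil] at h2
      subst h2
      rw [appPath_nil, projV_mk]
  | append_singleton l e ih =>
      intro j h
      have hd := valid_of_concat (i0 := i0) h.1
      have h2 : pEnd i0 (l ++ [e]) = G.t e := pEnd_concat i0 l e
      have hj : j = G.t e := by rw [← h.2, h2]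
      subst hj
      have hb : (bas k (⟨l ++ [e], h⟩ : PPath i0 (G.t e))) =
          (ProjRep k i0).f e (bas k (⟨l, hd.1, hd.2⟩ : PPath i0 (G.s e))) := by
        rw [Pf_bas_valid e ⟨l, hd.1, hd.2⟩ h.1]
      rw [hb, ψ.comm e, ih (G.s e) ⟨hd.1, hd.2⟩, appPath_append]
      exact (projV_fstep Y e _ (by rw [appPath_fst_pEnd]; exact hd.2)).symm

lemma appPath_map {X Y : Repn G k} (e : RepHom X Y) (l : List G.A) (i : G.V) (x : X.V i) :
    Y.appPath l ⟨i, e.app i x⟩ =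
      ⟨(X.appPath l ⟨i, x⟩).1, e.app _ ((X.appPath l ⟨i, x⟩).2)⟩ := by
  induction l generalizing i x with
  | nil => rfl
  | cons a l ih =>
      rw [appPath_cons, appPath_cons]
      have hstep : (if h : i = G.s a then Y.f a (cast (congrArg Y.V h) (e.app i x)) else 0)
          = e.app (G.t a) (if h : i = G.s a then X.f a (cast (congrArg X.V h) x) else 0) := by
        by_cases h : i = G.s a
        · rw [dif_pos h, dif_pos h]
          subst h
          exact (e.comm a x).symm
        · rw [dif_neg h, dif_neg h, map_zero]
      rw [hstep, ih]

lemma projV_map {X Y : Repn G k} (e : RepHom X Y) (j : G.V) (σ : Σ i, X.V i) :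
    e.app j (projV X j σ) = projV Y j ⟨σ.1, e.app σ.1 σ.2⟩ := by
  obtain ⟨i, x⟩ := σ
  show e.app j (projV X j ⟨i, x⟩) = projV Y j ⟨i, e.app i x⟩
  unfold projV
  by_cases h : i = j
  · subst h
    rw [dif_pos rfl, dif_pos rfl]
    rw [cast_eq, cast_eq]
  · rw [dif_neg h, dif_neg h, map_zero]

variable (k) in
def CH {i0 : G.V} (hfin : ∀ j : G.V, Fintype (PPath i0 j))
    (X : Repn G k) (hX : SatRel X) (hlen2 : ∀ p, G.rel p → p.length = 2) (ξ : X.V i0) :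
    RepHom (ProjRep k i0) X where
  app := CHapp k hfin X ξ
  comm := CH_comm hfin X hX hlen2 ξ

def ppath_fintype
    (hfin : {p : List G.A | List.Chain' (fun a b => G.t a = G.s b) p ∧
      ∀ q, G.rel q → ¬ q <:+: p}.Finite) (i0 : G.V) :
    ∀ j, Fintype (PPath i0 j) := by
  intro j
  have hsub : {r : List G.A | PValid i0 r ∧ pEnd i0 r = j} ⊆
      {p : List G.A | List.Chain' (fun a b => G.t a = G.s b) p ∧
        ∀ q, G.rel q → ¬ q <:+: p} := fun r hr => ⟨hr.1.2.1, hr.1.2.2⟩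
  haveI hf : Finite (PPath i0 j) := (hfin.subset hsub).to_subtype
  exact Fintype.ofFinite _

lemma projRep_isProj {i0 : G.V} (hfin : ∀ j : G.V, Fintype (PPath i0 j))
    (hlen2 : ∀ p, G.rel p → p.length = 2) :
    IsProjectiveRep (ProjRep k i0) := by
  refine ⟨satrel_proj hlen2 i0, ?_⟩
  intro X Y hX hY e he g
  obtain ⟨ξ, hξ⟩ := he i0 (g.app i0 (bas k ⟨[], valid_nil i0, rfl⟩))
  refine ⟨CH k hfin X hX hlen2 ξ, ?_⟩
  intro j x
  letI := hfin j
  refine linear_ext ((e.app j).comp ((CH k hfin X hX hlen2 ξ).app j)) (g.app j) ?_ x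
  intro r
  show e.app j (CHapp k hfin X ξ j (bas k r)) = g.app j (bas k r)
  rw [CHapp_bas]
  obtain ⟨l, hl⟩ := r
  rw [rephom_eq_CH hlen2 g l j hl, ← hξ, projV_map, ← appPath_map]

end L45

end
noncomputable section

namespace L45

open GQ

variable {G : GQ} {k : Type} [Field k]

/-! ### pathOf -/

def pathOf (β : G.A) (v : List (Letter G)) (t p : ℕ) : List G.A :=
  β :: (((v.take t).drop p).reverse.map toArrow)

lemma pathOf_self (β : G.A) (v : List (Letter G)) (t : ℕ) : pathOf β v t t = [β] := by
  unfold pathOf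
  rw [List.drop_eq_nil_of_le (by rw [List.length_take]; omega)]
  rfl

lemma pathOf_length (β : G.A) (v : List (Letter G)) (t p : ℕ) (hp : p ≤ t)
    (ht : t ≤ v.length) : (pathOf β v t p).length = 1 + (t - p) := by
  unfold pathOf
  simp only [List.length_cons, List.length_map, List.length_reverse, List.length_drop,
    List.length_take]
  omega

lemma pathOf_step (β : G.A) (v : List (Letter G)) (t p : ℕ) (hp : p < t)
    (ht : t ≤ v.length) :
    pathOf β v t p = pathOf β v t (p + 1) ++ [toArrow (v[p]'(by omega))] := by
  unfold pathOf
  have h1 : (v.take t).drop p = (v[p]'(by omega)) :: (v.take t).drop (p + 1) := by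
    rw [List.drop_eq_getElem_cons (by rw [List.length_take]; omega)]
    rw [List.getElem_take]
  rw [h1, List.reverse_cons, List.map_append]
  rfl

lemma pathOf_inj (β : G.A) (v : List (Letter G)) (t : ℕ) {p p' : ℕ} (hp : p ≤ t)
    (hp' : p' ≤ t) (ht : t ≤ v.length)
    (h : pathOf β v t p = pathOf β v t p') : p = p' := by
  have h2 := congrArg List.length h
  rw [pathOf_length β v t p hp ht, pathOf_length β v t p' hp' ht] at h2
  omega

lemma pathOf_getLast (β : G.A) (v : List (Letter G)) (t p : ℕ) (hp : p < t)
    (ht : t ≤ v.length) :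
    (pathOf β v t p).getLast? = some (toArrow (v[p]'(by omega))) := by
  rw [pathOf_step β v t p hp ht, List.getLast?_concat]

/-! ### tracking steps in the string module of `w` -/

lemma appPath_snd_zero (X : Repn G k) (e : G.A) (σ : Σ i, X.V i) (h : σ.2 = 0) :
    (X.appPath [e] σ).2 = 0 := by
  obtain ⟨i, y⟩ := σ
  have hy : y = 0 := h
  subst hy
  exact appPath_single_zero X e i

section SRW

variable (s₀ : G.V) (w : List (Letter G))

lemma bas_pos_eval {i : G.V} (p₀ p : {j : Fin (w.length + 1) // G.vtxN s₀ w (j : ℕ) = i}) :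
    bas k p₀ p = if (p.1 : ℕ) = (p₀.1 : ℕ) then (1 : k) else 0 := by
  unfold bas
  by_cases h : (p.1 : ℕ) = (p₀.1 : ℕ)
  · rw [if_pos h, if_pos]
    exact Subtype.ext (Fin.ext h.symm)
  · rw [if_neg h, if_neg]
    intro hh
    exact h (by rw [hh])

lemma sr_step (hc : List.Chain' G.Ok w) {cA : G.A} {n n' : ℕ}
    (hL : G.Link w cA n n') (σ : Σ i, (stringRep k G s₀ w).V i)
    (h1 : σ.1 = G.vtxN s₀ w n)
    (h2 : ∀ q : {j : Fin (w.length + 1) // G.vtxN s₀ w (j : ℕ) = G.vtxN s₀ w n},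
        projV (stringRep k G s₀ w) (G.vtxN s₀ w n) σ q = if (q.1 : ℕ) = n then (1 : k) else 0) :
    ((stringRep k G s₀ w).appPath [cA] σ).1 = G.vtxN s₀ w n' ∧
    ∀ q : {j : Fin (w.length + 1) // G.vtxN s₀ w (j : ℕ) = G.vtxN s₀ w n'},
      projV (stringRep k G s₀ w) (G.vtxN s₀ w n') ((stringRep k G s₀ w).appPath [cA] σ) q
        = if (q.1 : ℕ) = n' then (1 : k) else 0 := by
  obtain ⟨i, y⟩ := σ
  have h1' : i = G.vtxN s₀ w n := h1
  subst h1'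
  have hsv : G.vtxN s₀ w n = G.s cA := (link_vtx s₀ w hc hL).1
  have htv : G.vtxN s₀ w n' = G.t cA := (link_vtx s₀ w hc hL).2
  have hy : ∀ q : {j : Fin (w.length + 1) // G.vtxN s₀ w (j : ℕ) = G.vtxN s₀ w n},
      y q = if (q.1 : ℕ) = n then (1 : k) else 0 := by
    intro q
    have h3 := h2 q
    rw [projV_mk] at h3
    exact h3
  have h3 : (stringRep k G s₀ w).appPath [cA] ⟨G.vtxN s₀ w n, y⟩ =
      ⟨G.t cA, (stringRep k G s₀ w).f cA
        (cast (congrArg (stringRep k G s₀ w).V hsv) y)⟩ := by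
    rw [appPath_single_mk, dif_pos hsv]
  rw [h3]
  refine ⟨htv.symm, ?_⟩
  intro q
  have h4 : projV (stringRep k G s₀ w) (G.vtxN s₀ w n')
      (⟨G.t cA, (stringRep k G s₀ w).f cA
        (cast (congrArg (stringRep k G s₀ w).V hsv) y)⟩ : Σ i, (stringRep k G s₀ w).V i) =
      cast (congrArg (stringRep k G s₀ w).V htv.symm)
        ((stringRep k G s₀ w).f cA (cast (congrArg (stringRep k G s₀ w).V hsv) y)) := by
    unfold projV
    rw [dif_pos htv.symm]
  rw [h4, cast_eval_sr s₀ w htv.symm]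
  rw [SRf_bas_eval s₀ w hc hL _ (fun p => by rw [cast_eval_sr s₀ w hsv]; exact hy _) _]

lemma sr_step_zero (hc : List.Chain' G.Ok w) {cA : G.A} {n : ℕ}
    (hno : ∀ q', ¬ G.Link w cA n q') (σ : Σ i, (stringRep k G s₀ w).V i)
    (h1 : σ.1 = G.vtxN s₀ w n)
    (h2 : ∀ q : {j : Fin (w.length + 1) // G.vtxN s₀ w (j : ℕ) = G.vtxN s₀ w n},
        projV (stringRep k G s₀ w) (G.vtxN s₀ w n) σ q = if (q.1 : ℕ) = n then (1 : k) else 0) :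
    ((stringRep k G s₀ w).appPath [cA] σ).2 = 0 := by
  obtain ⟨i, y⟩ := σ
  have h1' : i = G.vtxN s₀ w n := h1
  subst h1'
  have hy : ∀ q : {j : Fin (w.length + 1) // G.vtxN s₀ w (j : ℕ) = G.vtxN s₀ w n},
      y q = if (q.1 : ℕ) = n then (1 : k) else 0 := by
    intro q
    have h3 := h2 q
    rw [projV_mk] at h3
    exact h3
  rw [appPath_single_mk]
  show (if h : G.vtxN s₀ w n = G.s cA then (stringRep k G s₀ w).f cA
      (cast (congrArg (stringRep k G s₀ w).V h) y) else 0) = 0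
  by_cases hsv : G.vtxN s₀ w n = G.s cA
  · rw [dif_pos hsv]
    funext q
    rw [SRf_eval_zero s₀ w hno _ (fun p => by rw [cast_eval_sr s₀ w hsv]; exact hy _) q]
    rfl
  · rw [dif_neg hsv]

end SRW

/-! ### the map `g` into the projective -/

lemma SV_add_apply {s₀ : G.V} {u : List (Letter G)} {i : G.V}
    (x y : (stringRep k G s₀ u).V i)
    (p : {j : Fin (u.length + 1) // G.vtxN s₀ u (j : ℕ) = i}) :
    (x + y) p = x p + y p := rfl

lemma SV_smul_apply {s₀ : G.V} {u : List (Letter G)} {i : G.V} (c : k)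
    (x : (stringRep k G s₀ u).V i)
    (p : {j : Fin (u.length + 1) // G.vtxN s₀ u (j : ℕ) = i}) :
    (c • x) p = c * x p := rfl

variable (k) in
def gApp (s₀v : G.V) (v : List (Letter G)) (i0 : G.V) (β : G.A) (t : ℕ) (i : G.V) :
    (stringRep k G s₀v v).V i →ₗ[k] (ProjRep k i0).V i where
  toFun x r :=
    if h : ∃ p : {j : Fin (v.length + 1) // G.vtxN s₀v v (j : ℕ) = i},
        (p.1 : ℕ) ≤ t ∧ r.1 = pathOf β v t (p.1 : ℕ) then x h.choose else 0
  map_add' := by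
    intro x y
    funext r
    show (if h : ∃ p : {j : Fin (v.length + 1) // G.vtxN s₀v v (j : ℕ) = i},
        (p.1 : ℕ) ≤ t ∧ r.1 = pathOf β v t (p.1 : ℕ) then (x + y) h.choose else 0) =
      (if h : ∃ p : {j : Fin (v.length + 1) // G.vtxN s₀v v (j : ℕ) = i},
        (p.1 : ℕ) ≤ t ∧ r.1 = pathOf β v t (p.1 : ℕ) then x h.choose else 0) +
      (if h : ∃ p : {j : Fin (v.length + 1) // G.vtxN s₀v v (j : ℕ) = i},
        (p.1 : ℕ) ≤ t ∧ r.1 = pathOf β v t (p.1 : ℕ) then y h.choose else 0)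
    by_cases h : ∃ p : {j : Fin (v.length + 1) // G.vtxN s₀v v (j : ℕ) = i},
        (p.1 : ℕ) ≤ t ∧ r.1 = pathOf β v t (p.1 : ℕ)
    · rw [dif_pos h, dif_pos h, dif_pos h, SV_add_apply]
    · rw [dif_neg h, dif_neg h, dif_neg h, add_zero]
  map_smul' := by
    intro c x
    funext r
    show (if h : ∃ p : {j : Fin (v.length + 1) // G.vtxN s₀v v (j : ℕ) = i},
        (p.1 : ℕ) ≤ t ∧ r.1 = pathOf β v t (p.1 : ℕ) then (c • x) h.choose else 0) =
      c * (if h : ∃ p : {j : Fin (v.length + 1) // G.vtxN s₀v v (j : ℕ) = i},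
        (p.1 : ℕ) ≤ t ∧ r.1 = pathOf β v t (p.1 : ℕ) then x h.choose else 0)
    by_cases h : ∃ p : {j : Fin (v.length + 1) // G.vtxN s₀v v (j : ℕ) = i},
        (p.1 : ℕ) ≤ t ∧ r.1 = pathOf β v t (p.1 : ℕ)
    · rw [dif_pos h, dif_pos h, SV_smul_apply]
    · rw [dif_neg h, dif_neg h, mul_zero]

lemma gApp_apply (s₀v : G.V) (v : List (Letter G)) (i0 : G.V) (β : G.A) (t : ℕ) (i : G.V)
    (x : (stringRep k G s₀v v).V i) (r : PPath i0 i) :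
    gApp k s₀v v i0 β t i x r =
      if h : ∃ p : {j : Fin (v.length + 1) // G.vtxN s₀v v (j : ℕ) = i},
          (p.1 : ℕ) ≤ t ∧ r.1 = pathOf β v t (p.1 : ℕ) then x h.choose else 0 := rfl

lemma gApp_eval (s₀v : G.V) (v : List (Letter G)) (i0 : G.V) (β : G.A) (t : ℕ) (i : G.V)
    {n₀ : ℕ} (x : (stringRep k G s₀v v).V i)
    (hx : ∀ p : {j : Fin (v.length + 1) // G.vtxN s₀v v (j : ℕ) = i},
      x p = if (p.1 : ℕ) = n₀ then (1 : k) else 0)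
    (hn₀ : n₀ ≤ v.length) (hvtx₀ : G.vtxN s₀v v n₀ = i)
    (ht : t ≤ v.length) (r : PPath i0 i) :
    gApp k s₀v v i0 β t i x r =
      if (n₀ ≤ t ∧ r.1 = pathOf β v t n₀) then (1 : k) else 0 := by
  rw [gApp_apply]
  by_cases h : ∃ p : {j : Fin (v.length + 1) // G.vtxN s₀v v (j : ℕ) = i},
      (p.1 : ℕ) ≤ t ∧ r.1 = pathOf β v t (p.1 : ℕ)
  · rw [dif_pos h, hx]
    by_cases h2 : n₀ ≤ t ∧ r.1 = pathOf β v t n₀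
    · rw [if_pos h2, if_pos]
      have hs := h.choose_spec
      exact pathOf_inj β v t hs.1 h2.1 ht (hs.2.symm.trans h2.2)
    · rw [if_neg h2, if_neg]
      intro hceq
      refine h2 ?_
      have hs := h.choose_spec
      rw [← hceq]
      exact hs
  · rw [dif_neg h, if_neg]
    intro h2
    exact h ⟨⟨⟨n₀, by omega⟩, hvtx₀⟩, h2⟩

lemma gApp_zero_eval (s₀v : G.V) (v : List (Letter G)) (i0 : G.V) (β : G.A) (t : ℕ)
    (i : G.V) (r : PPath i0 i) :
    gApp k s₀v v i0 β t i 0 r = 0 := by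
  rw [map_zero]
  rfl

end L45

end
noncomputable section

namespace L45

open GQ

variable {G : GQ} {k : Type} [Field k]

lemma getElem_congr_idx {α : Type*} (l : List α) {a b : ℕ} (h : a = b) (ha : a < l.length) :
    l[a]'ha = l[b]'(h ▸ ha) := by subst h; rfl

lemma v_pair_norel {v : List (Letter G)} (hv : G.IsStringWord v) {p : ℕ}
    (hp : p + 1 < v.length) {c c'' : G.A} (hc : v[p]'(by omega) = Letter.inv c)
    (hc'' : v[p + 1]'hp = Letter.inv c'') : ¬ G.rel [c'', c] := by
  intro hrel
  refine (hv.2 [c'', c] hrel).2 ?_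
  show [Letter.inv c, Letter.inv c''] <:+: v
  rw [pair_infix_iff]
  exact ⟨p, by rw [List.getElem?_eq_getElem (by omega), hc],
    by rw [List.getElem?_eq_getElem hp, hc'']⟩

lemma pEnd_single (i0 : G.V) (e : G.A) : pEnd i0 [e] = G.t e := pEnd_concat i0 [] e

lemma projV_congr_sr (s₀ : G.V) (u : List (Letter G)) {j j' : G.V} (h : j = j')
    (σ : Σ i, (stringRep k G s₀ u).V i)
    (q : {x : Fin (u.length + 1) // G.vtxN s₀ u (x : ℕ) = j'}) :
    projV (stringRep k G s₀ u) j' σ q =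
      projV (stringRep k G s₀ u) j σ ⟨q.1, q.2.trans h.symm⟩ := by
  subst h
  rfl

/-- The main abstract lemma: under the combinatorial hypotheses the canonical map `φ`
factors through the projective `P(s β)`. -/
lemma key (s₀v : G.V) (v : List (Letter G)) (s₀w : G.V) (w : List (Letter G))
    (hfinG : {p : List G.A | List.Chain' (fun a b => G.t a = G.s b) p ∧
      ∀ q, G.rel q → ¬ q <:+: p}.Finite)
    (hlen2 : ∀ p, G.rel p → p.length = 2)
    (hG3 : ∀ a b c : G.A, G.t a = G.s b → G.t a = G.s c →
      ¬ G.rel [a, b] → ¬ G.rel [a, c] → b = c)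
    (hvStr : G.IsStringWord v) (hwStr : G.IsStringWord w)
    (lD m : ℕ) (hm : 1 ≤ m) (hlen : lD + m ≤ v.length)
    (hEinv : ∀ p, (hp : p < lD + m) → ∃ c, v[p]'(by omega) = Letter.inv c)
    (hFar : ∀ (hp : lD + m < v.length) (c : G.A), v[lD + m]'hp ≠ Letter.inv c)
    (hSD : ∀ (h0 : 0 < v.length) (e : G.A), G.s e = G.vtxN s₀v v 0 →
      G.rel [toArrow (v[0]'h0), e])
    (β : G.A) (τ : ℕ → ℕ) (ρ : ℕ)
    (hτw : ∀ p, (hp1 : lD ≤ p) → (hp2 : p < lD + m) →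
      G.Link w (toArrow (v[p]'(by omega))) (τ (p + 1)) (τ p))
    (hβL : G.Link w β ρ (τ (lD + m)))
    (hkill : ∀ e q', ¬ G.Link w e (τ lD) q')
    (hvtx : ∀ p, lD ≤ p → p ≤ lD + m → G.vtxN s₀w w (τ p) = G.vtxN s₀v v p)
    (hτinj : ∀ p p', lD ≤ p → p ≤ lD + m → lD ≤ p' → p' ≤ lD + m → τ p = τ p' → p = p')
    (cnd : ℕ → ℕ → Prop)
    (hcnd₁ : ∀ p, lD ≤ p → p ≤ lD + m → cnd (τ p) p)
    (hcnd₂ : ∀ q p, cnd q p → lD ≤ p ∧ p ≤ lD + m ∧ q = τ p)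
    (φ : RepHom (stringRep k G s₀v v) (stringRep k G s₀w w))
    (hφ : ∀ (i : G.V) (x : (stringRep k G s₀v v).V i)
      (q : {j : Fin (w.length + 1) // G.vtxN s₀w w (j : ℕ) = i}),
      ∃ _inst : Decidable (∃ p : {j : Fin (v.length + 1) // G.vtxN s₀v v (j : ℕ) = i},
          cnd (q.1 : ℕ) ((p.1 : Fin (v.length + 1)) : ℕ)),
        φ.app i x q = @dite _
          (∃ p : {j : Fin (v.length + 1) // G.vtxN s₀v v (j : ℕ) = i},
            cnd (q.1 : ℕ) ((p.1 : Fin (v.length + 1)) : ℕ)) _inst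
          (fun h => x h.choose) (fun _ => 0)) :
    FactorsThroughProj φ := by
  have hchv : List.Chain' G.Ok v := hvStr.1
  have hchw : List.Chain' G.Ok w := hwStr.1
  have hi0 : G.vtxN s₀w w ρ = G.s β := (link_vtx s₀w w hchw hβL).1
  have hτt : G.vtxN s₀w w (τ (lD + m)) = G.t β := (link_vtx s₀w w hchw hβL).2
  have hfin : ∀ j : G.V, Fintype (PPath (G := G) (G.s β) j) := ppath_fintype hfinG (G.s β)
  have hsatw : SatRel (stringRep k G s₀w w) := satrel_stringRep s₀w w hwStr hlen2
  set ξ : (stringRep k G s₀w w).V (G.s β) :=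
    (fun q => if (q.1 : ℕ) = ρ then (1 : k) else 0 :
      {j : Fin (w.length + 1) // G.vtxN s₀w w (j : ℕ) = G.s β} → k) with hξ
  -- junction facts at the top of the path
  have hβLink : G.Link w (toArrow (v[lD + m - 1]'(by omega))) (τ (lD + m)) (τ (lD + m - 1)) := by
    have h := hτw (lD + m - 1) (by omega) (by omega)
    rw [show lD + m - 1 + 1 = lD + m from by omega] at h
    exact h
  have hβs : G.t β = G.s (toArrow (v[lD + m - 1]'(by omega))) :=
    hτt.symm.trans (link_vtx s₀w w hchw hβLink).1
  have hβc : ¬ G.rel [β, toArrow (v[lD + m - 1]'(by omega))] :=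
    fun hrel => no_rel_links w hwStr hrel hβL hβLink
  -- validity of the paths `pathOf p`
  have F4 : ∀ j, j ≤ lD + m → PValid (G.s β) (pathOf β v (lD + m) (lD + m - j)) ∧
      pEnd (G.s β) (pathOf β v (lD + m) (lD + m - j)) = G.vtxN s₀v v (lD + m - j) := by
    intro j
    induction j with
    | zero =>
        intro _
        rw [Nat.sub_zero, pathOf_self]
        refine ⟨⟨by simp, List.isChain_singleton β, fun q hq hinf => ?_⟩, ?_⟩
        · have hq2 := (G.rel_path q hq).2
          have hq3 := hinf.length_le
          simp at hq3
          omega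
        · rw [pEnd_single, ← hτt, hvtx (lD + m) (by omega) le_rfl]
    | succ j ih =>
        intro hj
        have hplt : lD + m - (j + 1) < lD + m := by omega
        obtain ⟨c, hc⟩ := hEinv (lD + m - (j + 1)) hplt
        have ihh := ih (by omega)
        have hstep : lD + m - (j + 1) + 1 = lD + m - j := by omega
        have hPO := pathOf_step β v (lD + m) (lD + m - (j + 1)) hplt hlen
        rw [hstep] at hPO
        have hend : pEnd (G.s β) (pathOf β v (lD + m) (lD + m - j)) =
            G.s (toArrow (v[lD + m - (j + 1)]'(by omega))) := by
          refine ihh.2.trans ?_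
          refine (congrArg (G.vtxN s₀v v) hstep.symm).trans ?_
          refine (vtx_tgt s₀v v hchv (by omega)).trans ?_
          rw [hc]
          rfl
        have hnz : ∀ z, (pathOf β v (lD + m) (lD + m - j)).getLast? = some z →
            ¬ G.rel [z, toArrow (v[lD + m - (j + 1)]'(by omega))] := by
          intro z hz hrel
          by_cases hjt : j = 0
          · subst hjt
            rw [Nat.sub_zero, pathOf_self] at hz
            have hzβ : z = β := by simpa using hz.symm
            subst hzβ
            exact hβc hrel
          · have hjlt : lD + m - j < lD + m := by omega
            obtain ⟨c'', hc''⟩ := hEinv (lD + m - j) hjlt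
            rw [pathOf_getLast β v (lD + m) (lD + m - j) hjlt hlen] at hz
            have hzz : z = toArrow (v[lD + m - j]'(by omega)) := (Option.some.inj hz).symm
            subst hzz
            have hc''' : v[(lD + m - (j + 1)) + 1]'(by omega) = Letter.inv c'' :=
              (getElem_congr_idx v hstep (by omega)).trans hc''
            rw [hc, hc''] at hrel
            simp only [toArrow_inv] at hrel
            exact v_pair_norel hvStr (by omega) hc hc''' hrel
        have hval := valid_extend hlen2 ihh.1 hend hnz
        rw [← hPO] at hval
        refine ⟨hval, ?_⟩
        rw [hPO, pEnd_concat, vtx_src s₀v v (by omega), hc]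
        rfl
  have F4' : ∀ p, p ≤ lD + m → PValid (G.s β) (pathOf β v (lD + m) p) ∧
      pEnd (G.s β) (pathOf β v (lD + m) p) = G.vtxN s₀v v p := by
    intro p hp
    have h := F4 (lD + m - p) (by omega)
    rw [show lD + m - (lD + m - p) = p from by omega] at h
    exact h
  -- extension classification
  have CLAIM : ∀ (e : G.A) (p : ℕ) (hp : p ≤ lD + m),
      PValid (G.s β) (pathOf β v (lD + m) p ++ [e]) →
      1 ≤ p ∧ v[p - 1]'(by omega) = Letter.inv e := by
    intro e p hp hval
    have hjun := valid_of_concat hval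
    have hnr := norel_of_concat hval
    by_cases hpt : p = lD + m
    · subst hpt
      have hrelβ : ¬ G.rel [β, e] := by
        refine hnr β ?_
        rw [pathOf_self]
        rfl
      have hend : G.t β = G.s e := by
        have h5 := hjun.2
        rw [pathOf_self, pEnd_single] at h5
        exact h5
      obtain ⟨cm, hcm⟩ := hEinv (lD + m - 1) (by omega)
      have heq : e = toArrow (v[lD + m - 1]'(by omega)) := hG3 β e _ hend hβs hrelβ hβc
      refine ⟨by omega, ?_⟩
      rw [hcm]
      rw [heq, hcm]
      rfl
    · have hplt : p < lD + m := by omega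
      obtain ⟨c', hc'⟩ := hEinv p hplt
      have hz := pathOf_getLast β v (lD + m) p hplt hlen
      have hrel1 : ¬ G.rel [toArrow (v[p]'(by omega)), e] := hnr _ hz
      have hend : G.t (toArrow (v[p]'(by omega))) = G.s e := by
        have h5 := hjun.2
        rw [pathOf_step β v (lD + m) p hplt hlen, pEnd_concat] at h5
        exact h5
      by_cases hp1 : 1 ≤ p
      · obtain ⟨c'', hc''⟩ := hEinv (p - 1) (by omega)
        have hc''2 : v[(p - 1) + 1]'(by omega) = Letter.inv c' :=
          (getElem_congr_idx v (show p - 1 + 1 = p from by omega) (by omega)).trans hc'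
        have hnr2 : ¬ G.rel [c', c''] := v_pair_norel hvStr (by omega) hc'' hc''2
        have hok := ok_get v hchv (n := p - 1) (by omega)
        rw [hc'', hc''2] at hok
        have hend2 : G.t c' = G.s c'' := hok.1.symm
        have hend3 : G.t c' = G.s e := by
          rw [hc'] at hend
          simpa using hend
        have hrel1' : ¬ G.rel [c', e] := by
          rw [hc'] at hrel1
          simpa using hrel1
        have heq : e = c'' := hG3 c' e c'' hend3 hend2 hrel1' hnr2
        exact ⟨hp1, by rw [hc'', heq]⟩
      · exfalso
        have hp0 : p = 0 := by omega
        subst hp0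
        refine hrel1 (hSD (by omega) e ?_)
        rw [vtx_src s₀v v (by omega)]
        rw [hc'] at hend ⊢
        simp only [toArrow_inv] at hend
        show G.s e = (Letter.inv c').src
        exact hend.symm
  -- evaluation of ξ through projV
  have hξval : ∀ q : {j : Fin (w.length + 1) // G.vtxN s₀w w (j : ℕ) = G.vtxN s₀w w ρ},
      projV (stringRep k G s₀w w) (G.vtxN s₀w w ρ)
        (⟨G.s β, ξ⟩ : Σ i, (stringRep k G s₀w w).V i) q =
        if (q.1 : ℕ) = ρ then (1 : k) else 0 := by
    intro q
    have h4 : projV (stringRep k G s₀w w) (G.vtxN s₀w w ρ)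
        (⟨G.s β, ξ⟩ : Σ i, (stringRep k G s₀w w).V i) =
        cast (congrArg (stringRep k G s₀w w).V hi0.symm) ξ := by
      unfold projV
      rw [dif_pos hi0.symm]
    rw [h4, cast_eval_sr s₀w w hi0.symm]
  -- tracking the path action on ξ
  have F23 : ∀ j, j ≤ lD + m →
      (lD ≤ lD + m - j →
        (((stringRep k G s₀w w).appPath (pathOf β v (lD + m) (lD + m - j)) ⟨G.s β, ξ⟩).1
            = G.vtxN s₀w w (τ (lD + m - j)) ∧
         ∀ q : {j' : Fin (w.length + 1) //
            G.vtxN s₀w w (j' : ℕ) = G.vtxN s₀w w (τ (lD + m - j))},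
           projV (stringRep k G s₀w w) (G.vtxN s₀w w (τ (lD + m - j)))
             ((stringRep k G s₀w w).appPath (pathOf β v (lD + m) (lD + m - j)) ⟨G.s β, ξ⟩) q
             = if (q.1 : ℕ) = τ (lD + m - j) then (1 : k) else 0)) ∧
      (lD + m - j < lD →
        ((stringRep k G s₀w w).appPath (pathOf β v (lD + m) (lD + m - j)) ⟨G.s β, ξ⟩).2
          = 0) := by
    intro j
    induction j with
    | zero =>
        intro _
        rw [Nat.sub_zero]
        constructor
        · intro _
          rw [pathOf_self]
          exact sr_step s₀w w hchw hβL ⟨G.s β, ξ⟩ hi0.symm hξval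
        · intro hcon
          omega
    | succ j ih =>
        intro hj
        have hplt : lD + m - (j + 1) < lD + m := by omega
        have hstep : lD + m - (j + 1) + 1 = lD + m - j := by omega
        obtain ⟨c, hc⟩ := hEinv (lD + m - (j + 1)) hplt
        have hPO := pathOf_step β v (lD + m) (lD + m - (j + 1)) hplt hlen
        rw [hstep] at hPO
        rw [hPO, appPath_append]
        by_cases hble : lD ≤ lD + m - (j + 1)
        · have hble2 : lD ≤ lD + m - j := by omega
          have ihh := (ih (by omega)).1 hble2
          have hLw : G.Link w (toArrow (v[lD + m - (j + 1)]'(by omega)))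
              (τ (lD + m - j)) (τ (lD + m - (j + 1))) := by
            have h := hτw (lD + m - (j + 1)) hble hplt
            rw [hstep] at h
            exact h
          constructor
          · intro _
            exact sr_step s₀w w hchw hLw _ ihh.1 ihh.2
          · intro hcon
            omega
        · constructor
          · intro hcon
            omega
          · intro _
            by_cases hbl2 : lD ≤ lD + m - j
            · have hpl : lD + m - j = lD := by omega
              have ihh := (ih (by omega)).1 hbl2
              refine sr_step_zero s₀w w hchw (n := τ (lD + m - j)) ?_ _ ihh.1 ihh.2
              intro q' hq'
              rw [hpl] at hq'
              exact hkill _ q' hq'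
            · have ihh := (ih (by omega)).2 (by omega)
              exact appPath_snd_zero _ _ _ ihh
  have F23' : ∀ p, p ≤ lD + m →
      (lD ≤ p →
        (((stringRep k G s₀w w).appPath (pathOf β v (lD + m) p) ⟨G.s β, ξ⟩).1
            = G.vtxN s₀w w (τ p) ∧
         ∀ q : {j' : Fin (w.length + 1) // G.vtxN s₀w w (j' : ℕ) = G.vtxN s₀w w (τ p)},
           projV (stringRep k G s₀w w) (G.vtxN s₀w w (τ p))
             ((stringRep k G s₀w w).appPath (pathOf β v (lD + m) p) ⟨G.s β, ξ⟩) q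
             = if (q.1 : ℕ) = τ p then (1 : k) else 0)) ∧
      (p < lD →
        ((stringRep k G s₀w w).appPath (pathOf β v (lD + m) p) ⟨G.s β, ξ⟩).2 = 0) := by
    intro p hp
    have h := F23 (lD + m - p) (by omega)
    rw [show lD + m - (lD + m - p) = p from by omega] at h
    exact h
  -- the morphism g
  have gcomm : ∀ (e : G.A) (x : (stringRep k G s₀v v).V (G.s e)),
      gApp k s₀v v (G.s β) β (lD + m) (G.t e) ((stringRep k G s₀v v).f e x) =
        (ProjRep k (G.s β)).f e (gApp k s₀v v (G.s β) β (lD + m) (G.s e) x) := by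
    intro e x
    haveI : Fintype {j : Fin (v.length + 1) // G.vtxN s₀v v (j : ℕ) = G.s e} :=
      Fintype.ofFinite _
    refine linear_ext
      ((gApp k s₀v v (G.s β) β (lD + m) (G.t e)).comp ((stringRep k G s₀v v).f e))
      (((ProjRep k (G.s β)).f e).comp (gApp k s₀v v (G.s β) β (lD + m) (G.s e))) ?_ x
    intro p₀
    show gApp k s₀v v (G.s β) β (lD + m) (G.t e) ((stringRep k G s₀v v).f e (bas k p₀)) =
      (ProjRep k (G.s β)).f e (gApp k s₀v v (G.s β) β (lD + m) (G.s e) (bas k p₀))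
    have hn₀lt : ((p₀.1 : Fin (v.length + 1)) : ℕ) < v.length + 1 := p₀.1.isLt
    funext r
    have hY : ∀ r' : PPath (G.s β) (G.s e),
        gApp k s₀v v (G.s β) β (lD + m) (G.s e) (bas k p₀) r' =
          if (((p₀.1 : Fin (v.length + 1)) : ℕ) ≤ lD + m ∧
            r'.1 = pathOf β v (lD + m) ((p₀.1 : Fin (v.length + 1)) : ℕ)) then (1 : k) else 0 :=
      fun r' => gApp_eval s₀v v (G.s β) β (lD + m) (G.s e) _
        (fun p => bas_pos_eval s₀v v p₀ p) (by omega) p₀.2 hlen r'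
    by_cases hT1 : ((p₀.1 : Fin (v.length + 1)) : ℕ) ≤ lD + m ∧
        1 ≤ ((p₀.1 : Fin (v.length + 1)) : ℕ) ∧
        v[((p₀.1 : Fin (v.length + 1)) : ℕ) - 1]'(by omega) = Letter.inv e
    · obtain ⟨hle, h1p, hletter⟩ := hT1
      have hLv : G.Link v e ((p₀.1 : Fin (v.length + 1)) : ℕ)
          (((p₀.1 : Fin (v.length + 1)) : ℕ) - 1) := by
        right
        refine ⟨⟨((p₀.1 : Fin (v.length + 1)) : ℕ) - 1, by omega⟩, ?_, rfl,
          show ((p₀.1 : Fin (v.length + 1)) : ℕ) =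
            ((p₀.1 : Fin (v.length + 1)) : ℕ) - 1 + 1 from by omega⟩
        rw [List.get_eq_getElem]
        exact hletter
      have hvtx1 : G.vtxN s₀v v (((p₀.1 : Fin (v.length + 1)) : ℕ) - 1) = G.t e :=
        (link_vtx s₀v v hchv hLv).2
      have hfx : ∀ p : {j : Fin (v.length + 1) // G.vtxN s₀v v (j : ℕ) = G.t e},
          (stringRep k G s₀v v).f e (bas k p₀) p =
            if (p.1 : ℕ) = ((p₀.1 : Fin (v.length + 1)) : ℕ) - 1 then (1 : k) else 0 :=
        fun p => SRf_bas_eval s₀v v hchv hLv _ (fun p' => bas_pos_eval s₀v v p₀ p') p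
      have hPO : pathOf β v (lD + m) (((p₀.1 : Fin (v.length + 1)) : ℕ) - 1) =
          pathOf β v (lD + m) ((p₀.1 : Fin (v.length + 1)) : ℕ) ++ [e] := by
        rw [pathOf_step β v (lD + m) (((p₀.1 : Fin (v.length + 1)) : ℕ) - 1) (by omega) hlen,
          show ((p₀.1 : Fin (v.length + 1)) : ℕ) - 1 + 1 = ((p₀.1 : Fin (v.length + 1)) : ℕ)
            from by omega, hletter]
        rfl
      rw [gApp_eval s₀v v (G.s β) β (lD + m) (G.t e) _ hfx (by omega) hvtx1 hlen r]
      rw [Pf_apply]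
      by_cases hre : ∃ r₂ : PPath (G.s β) (G.s e), r.1 = r₂.1 ++ [e]
      · rw [dif_pos hre, hY]
        by_cases hr : r.1 = pathOf β v (lD + m) (((p₀.1 : Fin (v.length + 1)) : ℕ) - 1)
        · rw [if_pos ⟨by omega, hr⟩]
          have hcc : hre.choose.1 = pathOf β v (lD + m) ((p₀.1 : Fin (v.length + 1)) : ℕ) := by
            have h6 : hre.choose.1 ++ [e] =
                pathOf β v (lD + m) ((p₀.1 : Fin (v.length + 1)) : ℕ) ++ [e] :=
              hre.choose_spec.symm.trans (hr.trans hPO)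
            have h7 := congrArg List.dropLast h6
            rw [List.dropLast_concat, List.dropLast_concat] at h7
            exact h7
          rw [if_pos ⟨hle, hcc⟩]
        · rw [if_neg (fun hcon => hr hcon.2), if_neg]
          intro hcon
          refine hr ?_
          rw [hre.choose_spec, hcon.2, ← hPO]
      · rw [dif_neg hre, if_neg]
        intro hcon
        refine hre ⟨⟨pathOf β v (lD + m) ((p₀.1 : Fin (v.length + 1)) : ℕ),
          (F4' _ hle).1, (F4' _ hle).2.trans p₀.2⟩, ?_⟩
        rw [hcon.2, ← hPO]
    · -- both sides vanish
      have hRHS : (ProjRep k (G.s β)).f e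
          (gApp k s₀v v (G.s β) β (lD + m) (G.s e) (bas k p₀)) r = 0 := by
        rw [Pf_apply]
        by_cases hre : ∃ r₂ : PPath (G.s β) (G.s e), r.1 = r₂.1 ++ [e]
        · rw [dif_pos hre, hY, if_neg]
          intro hcon
          have hval : PValid (G.s β)
              (pathOf β v (lD + m) ((p₀.1 : Fin (v.length + 1)) : ℕ) ++ [e]) := by
            have h8 := r.2.1
            rw [hre.choose_spec] at h8
            rw [hcon.2] at h8
            exact h8
          obtain ⟨hp1, hlet⟩ := CLAIM e ((p₀.1 : Fin (v.length + 1)) : ℕ) hcon.1 hval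
          exact hT1 ⟨hcon.1, hp1, hlet⟩
        · rw [dif_neg hre]
      rw [hRHS]
      by_cases hL : ∃ q', G.Link v e ((p₀.1 : Fin (v.length + 1)) : ℕ) q'
      · obtain ⟨q', hq'⟩ := hL
        have hvq' : G.vtxN s₀v v q' = G.t e := (link_vtx s₀v v hchv hq').2
        have hq'le : q' ≤ v.length := (link_le v hq').2
        have hfx : ∀ p : {j : Fin (v.length + 1) // G.vtxN s₀v v (j : ℕ) = G.t e},
            (stringRep k G s₀v v).f e (bas k p₀) p =
              if (p.1 : ℕ) = q' then (1 : k) else 0 :=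
          fun p => SRf_bas_eval s₀v v hchv hq' _ (fun p' => bas_pos_eval s₀v v p₀ p') p
        rw [gApp_eval s₀v v (G.s β) β (lD + m) (G.t e) _ hfx hq'le hvq' hlen r, if_neg]
        intro hcon
        rcases hq' with ⟨mm, hmm, hpm, hqm⟩ | ⟨mm, hmm, hqm, hpm⟩
        · rw [List.get_eq_getElem] at hmm
          obtain ⟨c, hc⟩ := hEinv (mm : ℕ) (by omega)
          exact nomatch (hmm.symm.trans hc)
        · rw [List.get_eq_getElem] at hmm
          by_cases hqt : q' = lD + m
          · refine hFar (by omega) e ?_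
            rw [getElem_congr_idx v (show lD + m = (mm : ℕ) from by omega)]
            exact hmm
          · refine hT1 ⟨by omega, by omega, ?_⟩
            rw [getElem_congr_idx v
              (show ((p₀.1 : Fin (v.length + 1)) : ℕ) - 1 = (mm : ℕ) from by omega)]
            exact hmm
      · have h0 : (stringRep k G s₀v v).f e (bas k p₀) = 0 := by
          funext p
          rw [SRf_eval_zero s₀v v (fun q' hq' => hL ⟨q', hq'⟩) _
            (fun p' => bas_pos_eval s₀v v p₀ p') p]
          rfl
        rw [h0, map_zero]
        rfl
  -- assemble the factorization
  refine ⟨ProjRep k (G.s β),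
    ⟨gApp k s₀v v (G.s β) β (lD + m), gcomm⟩,
    CH k hfin (stringRep k G s₀w w) hsatw hlen2 ξ,
    projRep_isProj hfin hlen2, ?_⟩
  intro i x
  haveI : Fintype {j : Fin (v.length + 1) // G.vtxN s₀v v (j : ℕ) = i} := Fintype.ofFinite _
  refine linear_ext
    ((CHapp k hfin (stringRep k G s₀w w) ξ i).comp (gApp k s₀v v (G.s β) β (lD + m) i))
    (φ.app i) ?_ x
  intro p₀
  show CHapp k hfin (stringRep k G s₀w w) ξ i
      (gApp k s₀v v (G.s β) β (lD + m) i (bas k p₀)) = φ.app i (bas k p₀)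
  funext q
  obtain ⟨inst0, heq⟩ := hφ i (bas k p₀) q
  rw [heq]
  by_cases hp₀ : ((p₀.1 : Fin (v.length + 1)) : ℕ) ≤ lD + m
  · -- g sends the basis vector to the basis vector of `pathOf p₀`
    have hgb : gApp k s₀v v (G.s β) β (lD + m) i (bas k p₀) =
        bas k (⟨pathOf β v (lD + m) ((p₀.1 : Fin (v.length + 1)) : ℕ),
          (F4' _ hp₀).1, (F4' _ hp₀).2.trans p₀.2⟩ : PPath (G.s β) i) := by
      funext r'
      rw [gApp_eval s₀v v (G.s β) β (lD + m) i _ (fun p => bas_pos_eval s₀v v p₀ p)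
        (by omega) p₀.2 hlen r']
      by_cases hr : r'.1 = pathOf β v (lD + m) ((p₀.1 : Fin (v.length + 1)) : ℕ)
      · rw [if_pos ⟨hp₀, hr⟩]
        have h9 : (⟨pathOf β v (lD + m) ((p₀.1 : Fin (v.length + 1)) : ℕ),
            (F4' _ hp₀).1, (F4' _ hp₀).2.trans p₀.2⟩ : PPath (G.s β) i) = r' :=
          Subtype.ext hr.symm
        rw [h9]
        exact (if_pos rfl).symm
      · rw [if_neg (fun hcon => hr hcon.2)]
        have h9 : (⟨pathOf β v (lD + m) ((p₀.1 : Fin (v.length + 1)) : ℕ),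
            (F4' _ hp₀).1, (F4' _ hp₀).2.trans p₀.2⟩ : PPath (G.s β) i) ≠ r' :=
          fun heq => hr (congrArg Subtype.val heq).symm
        exact (if_neg h9).symm
    rw [hgb, CHapp_bas]
    by_cases hlDle : lD ≤ ((p₀.1 : Fin (v.length + 1)) : ℕ)
    · have hF := (F23' _ hp₀).1 hlDle
      have hieq : G.vtxN s₀w w (τ ((p₀.1 : Fin (v.length + 1)) : ℕ)) = i :=
        (hvtx _ hlDle hp₀).trans p₀.2
      rw [projV_congr_sr s₀w w hieq]
      rw [hF.2]
      by_cases hq : (q.1 : ℕ) = τ ((p₀.1 : Fin (v.length + 1)) : ℕ)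
      · rw [if_pos hq]
        have hex : ∃ p : {j : Fin (v.length + 1) // G.vtxN s₀v v (j : ℕ) = i},
            cnd (q.1 : ℕ) ((p.1 : Fin (v.length + 1)) : ℕ) :=
          ⟨p₀, by rw [hq]; exact hcnd₁ _ hlDle hp₀⟩
        have h10 := hcnd₂ _ _ hex.choose_spec
        have hch : ((hex.choose.1 : Fin (v.length + 1)) : ℕ) =
            ((p₀.1 : Fin (v.length + 1)) : ℕ) := by
          refine hτinj _ _ h10.1 h10.2.1 hlDle hp₀ ?_
          rw [← h10.2.2, hq]
        rw [dif_pos hex, bas_pos_eval s₀v v, if_pos hch]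
      · rw [if_neg hq]
        by_cases hex : ∃ p : {j : Fin (v.length + 1) // G.vtxN s₀v v (j : ℕ) = i},
            cnd (q.1 : ℕ) ((p.1 : Fin (v.length + 1)) : ℕ)
        · have hne : ¬ ((hex.choose.1 : Fin (v.length + 1)) : ℕ) =
              ((p₀.1 : Fin (v.length + 1)) : ℕ) := by
            intro hcp
            have h10 := hcnd₂ _ _ hex.choose_spec
            exact hq (h10.2.2.trans (congrArg τ hcp))
          rw [dif_pos hex, bas_pos_eval s₀v v, if_neg hne]
        · rw [dif_neg hex]
    · have hF := (F23' _ hp₀).2 (by omega)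
      rw [projV_of_zero _ _ _ hF]
      by_cases hex : ∃ p : {j : Fin (v.length + 1) // G.vtxN s₀v v (j : ℕ) = i},
          cnd (q.1 : ℕ) ((p.1 : Fin (v.length + 1)) : ℕ)
      · have hne : ¬ ((hex.choose.1 : Fin (v.length + 1)) : ℕ) =
            ((p₀.1 : Fin (v.length + 1)) : ℕ) := by
          intro hcp
          have h10 := hcnd₂ _ _ hex.choose_spec
          omega
        rw [dif_pos hex, bas_pos_eval s₀v v, if_neg hne]
        rfl
      · rw [dif_neg hex]
        rfl
  · have hgb : gApp k s₀v v (G.s β) β (lD + m) i (bas k p₀) = 0 := by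
      funext r'
      rw [gApp_eval s₀v v (G.s β) β (lD + m) i _ (fun p => bas_pos_eval s₀v v p₀ p)
        (by omega) p₀.2 hlen r', if_neg (fun hcon => hp₀ hcon.1)]
      rfl
    rw [hgb, map_zero]
    by_cases hex : ∃ p : {j : Fin (v.length + 1) // G.vtxN s₀v v (j : ℕ) = i},
        cnd (q.1 : ℕ) ((p.1 : Fin (v.length + 1)) : ℕ)
    · rw [dif_pos hex, bas_pos_eval s₀v v, if_neg]
      · rfl
      · have h10 := hcnd₂ _ _ hex.choose_spec
        omega
    · rw [dif_neg hex]
      rfl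

end L45

end
noncomputable section

namespace L45

open GQ

variable {G : GQ} {k : Type} [Field k]

/-- Consequence of `N_a` starting in a deep: every arrow that could continue the string
`v` at its start forms a relation with the first letter. -/
lemma SD_consequence (hlen2 : ∀ p, G.rel p → p.length = 2) {s₀v : G.V}
    {v₀ Va Ua : List (Letter G)} {a : G.A}
    (hN : G.NCond a Va Ua) (hVane : Va ≠ [])
    (h0 : 0 < (Va ++ Letter.ar a :: v₀).length) (e : G.A)
    (hse : G.s e = G.vtxN s₀v (Va ++ Letter.ar a :: v₀) 0) :
    G.rel [toArrow ((Va ++ Letter.ar a :: v₀)[0]'h0), e] := by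
  by_contra hrel
  obtain ⟨x, Va', rfl⟩ := List.exists_cons_of_ne_nil hVane
  obtain ⟨c0, hc0⟩ := hN.1 x (by simp)
  have hv0 : ((x :: Va' ++ Letter.ar a :: v₀)[0]'h0) = x := rfl
  rw [hv0] at hrel
  -- the vertex at position 0
  have hvtx0 : G.vtxN s₀v (x :: Va' ++ Letter.ar a :: v₀) 0 = x.src :=
    vtx_src s₀v _ (by simp)
  rw [hvtx0] at hse
  -- contradict StartsInDeep
  refine hN.2.2.2.1 ⟨e, ?_, ?_⟩
  · show G.s e = G.wordSrc (G.s a) (x :: Va')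
    rw [hse]
    rfl
  · constructor
    · -- chain'
      show List.Chain' G.Ok (Letter.inv e :: (x :: (Va' ++ Letter.ar a :: Ua)))
      refine List.isChain_cons_cons.2 ?_
      constructor
      · constructor
        · exact hse
        · rw [hc0]
          exact fun hcon => nomatch hcon
      · exact hN.2.2.1.1
    · intro q hq
      obtain ⟨z1, z2, rfl⟩ := List.length_eq_two.1 (hlen2 q hq)
      constructor
      · intro hinf
        rw [show List.map Letter.ar [z1, z2] = [Letter.ar z1, Letter.ar z2] from rfl,
          pair_infix_iff] at hinf
        obtain ⟨n, h1, h2⟩ := hinf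
        cases n with
        | zero =>
            rw [show (Letter.inv e :: (x :: Va' ++ Letter.ar a :: Ua))[0]? =
              some (Letter.inv e) from rfl] at h1
            exact nomatch (Option.some.inj h1)
        | succ n' =>
            refine (hN.2.2.1.2 [z1, z2] hq).1 ?_
            rw [show List.map Letter.ar [z1, z2] = [Letter.ar z1, Letter.ar z2] from rfl,
              pair_infix_iff]
            exact ⟨n', by simpa using h1, by simpa using h2⟩
      · intro hinf
        rw [show strInv (List.map Letter.ar [z1, z2]) = [Letter.inv z2, Letter.inv z1]
          from rfl, pair_infix_iff] at hinf
        obtain ⟨n, h1, h2⟩ := hinf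
        cases n with
        | zero =>
            have hz2 : z2 = e := by
              rw [show (Letter.inv e :: (x :: Va' ++ Letter.ar a :: Ua))[0]? =
                some (Letter.inv e) from rfl] at h1
              cases Option.some.inj h1
              rfl
            have hz1 : Letter.inv z1 = x := by
              have h3 : (Letter.inv e :: (x :: Va' ++ Letter.ar a :: Ua))[1]? = some x := by
                simp
              rw [h3] at h2
              exact (Option.some.inj h2).symm
            refine hrel ?_
            have hx : toArrow x = z1 := by rw [← hz1]; rfl
            rw [← hx, hz2] at hq
            exact hq
        | succ n' =>
            refine (hN.2.2.1.2 [z1, z2] hq).2 ?_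
            rw [show strInv (List.map Letter.ar [z1, z2]) = [Letter.inv z2, Letter.inv z1]
              from rfl, pair_infix_iff]
            exact ⟨n', by simpa using h1, by simpa using h2⟩

end L45

end
open L45 in
set_option maxHeartbeats 2000000 in
/-- **Lemma 4.5.** Let `v = V_α α v₀` and let `p = (D,E,F) × (D',E',F') ∈ F(v) × S(w)` be an
admissible pair with `DE = V_α` and `l(E) > 0`.  If `E = E'` and `l(F') > 0`, or
`E⁻¹ = E'` and `l(D') > 0`, then the canonical homomorphism `f_p : M(v) → M(w)` factors
through a projective module. -/
theorem stmt6 (k : Type) [Field k] [IsAlgClosed k] (G : GQ) (hG : G.IsGentle)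
    (s₀w s₀v : G.V) (w v v₀ Va Ua : List (Letter G)) (a : G.A)
    (hw : G.GoodStr s₀w w) (hv : G.GoodStr s₀v v)
    (hdec : v = Va ++ Letter.ar a :: v₀) (hN : G.NCond a Va Ua)
    (D E F D' E' F' : List (Letter G))
    (hp : G.AdPair s₀v v s₀w w D E F D' E' F')
    (hDE : D ++ E = Va) (hE : E ≠ [])
    (φ : RepHom (stringRep k G s₀v v) (stringRep k G s₀w w)) :
    ((E' = E ∧ F' ≠ []) →
       CanonicalApp k G s₀v v s₀w w D.length D'.length E.length false φ →
       FactorsThroughProj φ) ∧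
    ((E' = strInv E ∧ D' ≠ []) →
       CanonicalApp k G s₀v v s₀w w D.length D'.length E.length true φ →
       FactorsThroughProj φ) := by
  obtain ⟨hSA, hlen2, hrelL, hrelR, hfinG⟩ := hG
  have hG3 := hSA.2.2.1
  subst hDE
  subst hdec
  have hm : 1 ≤ E.length := by
    have := List.length_pos_iff.2 hE
    omega
  have hlen : D.length + E.length ≤ ((D ++ E) ++ Letter.ar a :: v₀).length := by
    simp only [List.length_append, List.length_cons]
    omega
  have hEinv : ∀ p, (hpp : p < D.length + E.length) →
      ∃ c, ((D ++ E) ++ Letter.ar a :: v₀)[p]'(by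
        simp only [List.length_append, List.length_cons]; omega) = Letter.inv c := by
    intro p hpp
    have hp2 : p < (D ++ E).length := by simp only [List.length_append]; omega
    obtain ⟨c, hc⟩ := hN.1 _ (List.getElem_mem hp2)
    exact ⟨c, (List.getElem_append_left hp2).trans hc⟩
  have hva : ∀ hpp : D.length + E.length < ((D ++ E) ++ Letter.ar a :: v₀).length,
      ((D ++ E) ++ Letter.ar a :: v₀)[D.length + E.length]'hpp = Letter.ar a := by
    intro hpp
    rw [List.getElem_append_right (by simp only [List.length_append]; omega)]
    rw [getElem_congr_idx _ (show D.length + E.length - (D ++ E).length = 0 from by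
      simp only [List.length_append]; omega)]
    rfl
  have hFar : ∀ (hpp : D.length + E.length < ((D ++ E) ++ Letter.ar a :: v₀).length)
      (c : G.A), ((D ++ E) ++ Letter.ar a :: v₀)[D.length + E.length]'hpp ≠ Letter.inv c :=
    fun hpp c hcon => nomatch ((hva hpp).symm.trans hcon)
  have hDEne : D ++ E ≠ [] := by
    intro hcon
    have := congrArg List.length hcon
    simp only [List.length_append, List.length_nil] at this
    omega
  have hSD : ∀ (h0 : 0 < ((D ++ E) ++ Letter.ar a :: v₀).length) (e : G.A),
      G.s e = G.vtxN s₀v ((D ++ E) ++ Letter.ar a :: v₀) 0 →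
      G.rel [toArrow (((D ++ E) ++ Letter.ar a :: v₀)[0]'h0), e] :=
    fun h0 e hse => SD_consequence hlen2 hN hDEne h0 e hse
  have hvE : ∀ p, D.length ≤ p → (hp2 : p < D.length + E.length) →
      ((D ++ E) ++ Letter.ar a :: v₀)[p]'(by
        simp only [List.length_append, List.length_cons]; omega) =
        E[p - D.length]'(by omega) := by
    intro p hp1 hp2
    rw [List.getElem_append_left (show p < (D ++ E).length from by
      simp only [List.length_append]; omega)]
    rw [List.getElem_append_right hp1]
  have hEletter : ∀ j, (hj : j < E.length) → ∃ c, E[j]'hj = Letter.inv c :=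
    fun j hj => hN.1 _ (List.mem_append.2 (Or.inr (List.getElem_mem hj)))
  constructor
  · -- Case E' = E, F' ≠ []
    rintro ⟨hE', hF'⟩ hca
    replace hE' := hE'.symm
    subst hE'
    obtain ⟨b, hb⟩ := hp.2.1.2.2.resolve_left hF'
    obtain ⟨F'', hF''⟩ := List.head?_eq_some_iff.1 hb
    subst hF''
    have hw1 : w = D' ++ (E ++ (Letter.inv b :: F'')) := by
      rw [hp.2.1.1, List.append_assoc]
    subst hw1
    have hwE : ∀ j, (hj : j < E.length) →
        (D' ++ (E ++ (Letter.inv b :: F'')))[D'.length + j]'(by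
          simp only [List.length_append, List.length_cons]; omega) = E[j]'hj := by
      intro j hj
      rw [List.getElem_append_right (by omega : D'.length ≤ D'.length + j)]
      rw [getElem_congr_idx _ (show D'.length + j - D'.length = j from by omega)]
      exact List.getElem_append_left hj
    have hwb : (D' ++ (E ++ (Letter.inv b :: F'')))[D'.length + E.length]'(by
        simp only [List.length_append, List.length_cons]; omega) = Letter.inv b := by
      rw [List.getElem_append_right (by omega : D'.length ≤ D'.length + E.length)]
      rw [getElem_congr_idx _ (show D'.length + E.length - D'.length = E.length from by omega)]
      rw [List.getElem_append_right (le_refl E.length)]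
      rw [getElem_congr_idx _ (show E.length - E.length = 0 from by omega)]
      rfl
    have hτw : ∀ p, D.length ≤ p → (hp2 : p < D.length + E.length) →
        G.Link (D' ++ (E ++ (Letter.inv b :: F'')))
          (toArrow (((D ++ E) ++ Letter.ar a :: v₀)[p]'(by
            simp only [List.length_append, List.length_cons]; omega)))
          (D'.length + (p + 1 - D.length)) (D'.length + (p - D.length)) := by
      intro p hp1 hp2
      obtain ⟨c, hc⟩ := hEinv p hp2
      right
      refine ⟨⟨D'.length + (p - D.length), by
        simp only [List.length_append, List.length_cons]; omega⟩, ?_, rfl,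
        show D'.length + (p + 1 - D.length) = D'.length + (p - D.length) + 1 from by omega⟩
      rw [List.get_eq_getElem]
      show (D' ++ (E ++ (Letter.inv b :: F'')))[D'.length + (p - D.length)]'_ = _
      rw [hwE (p - D.length) (by omega), ← hvE p hp1 hp2, hc]
      rfl
    have hβL : G.Link (D' ++ (E ++ (Letter.inv b :: F''))) b (D'.length + E.length + 1)
        (D'.length + (D.length + E.length - D.length)) := by
      rw [show D'.length + (D.length + E.length - D.length) = D'.length + E.length from by
        omega]
      right
      refine ⟨⟨D'.length + E.length, by
        simp only [List.length_append, List.length_cons]; omega⟩, ?_, rfl, rfl⟩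
      rw [List.get_eq_getElem]
      exact hwb
    have hkill : ∀ (e : G.A) (q' : ℕ),
        ¬ G.Link (D' ++ (E ++ (Letter.inv b :: F''))) e (D'.length + (D.length - D.length))
          q' := by
      simp only [Nat.sub_self, Nat.add_zero]
      intro e q' hL
      rcases hL with ⟨mm, hmm, hpm, hqm⟩ | ⟨mm, hmm, hqm, hpm⟩
      · rw [List.get_eq_getElem] at hmm
        obtain ⟨c, hc⟩ := hEletter 0 (by omega)
        have h1 : (D' ++ (E ++ (Letter.inv b :: F'')))[(mm : ℕ)] = E[0]'(by omega) := by
          rw [getElem_congr_idx _ (show (mm : ℕ) = D'.length + 0 from by omega)]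
          exact hwE 0 (by omega)
        exact nomatch (hc.symm.trans (h1.symm.trans hmm))
      · have hD'ne : D' ≠ [] := by
          intro hcon
          have h0 := congrArg List.length hcon
          simp only [List.length_nil] at h0
          omega
        obtain ⟨d', hd'⟩ := hp.2.1.2.1.resolve_left hD'ne
        rw [List.get_eq_getElem] at hmm
        have h1 : (D' ++ (E ++ (Letter.inv b :: F'')))[(mm : ℕ)] = D'[(mm : ℕ)]'(by omega) :=
          List.getElem_append_left (by omega)
        have h2 : D'.getLast? = some (D'[(mm : ℕ)]'(by omega)) := by
          rw [List.getLast?_eq_getElem?, show D'.length - 1 = (mm : ℕ) from by omega]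
          exact List.getElem?_eq_getElem (by omega)
        rw [hd'] at h2
        have h3 := Option.some.inj h2
        rw [h1, ← h3] at hmm
        exact nomatch hmm
    have hvtx : ∀ p, D.length ≤ p → p ≤ D.length + E.length →
        G.vtxN s₀w (D' ++ (E ++ (Letter.inv b :: F''))) (D'.length + (p - D.length)) =
        G.vtxN s₀v ((D ++ E) ++ Letter.ar a :: v₀) p := by
      intro p hp1 hp2
      by_cases hpe : p < D.length + E.length
      · rw [vtx_src s₀w _ (by simp only [List.length_append, List.length_cons]; omega),
          vtx_src s₀v _ (by simp only [List.length_append, List.length_cons]; omega)]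
        rw [hwE (p - D.length) (by omega), hvE p hp1 hpe]
      · have hpe2 : p = D.length + E.length := by omega
        subst hpe2
        rw [show D'.length + (D.length + E.length - D.length) =
          (D'.length + (E.length - 1)) + 1 from by omega,
          vtx_tgt s₀w _ hw.1.1 (by simp only [List.length_append, List.length_cons]; omega)]
        rw [show D.length + E.length = (D.length + (E.length - 1)) + 1 from by omega,
          vtx_tgt s₀v _ hv.1.1 (by simp only [List.length_append, List.length_cons]; omega)]
        rw [hwE (E.length - 1) (by omega)]
        rw [hvE (D.length + (E.length - 1)) (by omega) (by omega)]
        rw [getElem_congr_idx E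
          (show D.length + (E.length - 1) - D.length = E.length - 1 from by omega)]
    exact L45.key s₀v _ s₀w _ hfinG hlen2 hG3 hv.1 hw.1 D.length E.length hm hlen hEinv
      hFar hSD b (fun p => D'.length + (p - D.length)) (D'.length + E.length + 1)
      hτw hβL hkill hvtx
      (fun p p' h1 h2 h3 h4 h5 => by
        have h6 : D'.length + (p - D.length) = D'.length + (p' - D.length) := h5
        omega)
      (fun qn pn => D'.length ≤ qn ∧ qn ≤ D'.length + E.length ∧
        pn = (if (false : Bool) then D.length + (E.length - (qn - D'.length))
          else D.length + (qn - D'.length)))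
      (fun p h1 h2 => by
        show D'.length ≤ D'.length + (p - D.length) ∧
          D'.length + (p - D.length) ≤ D'.length + E.length ∧
          p = (if (false : Bool) then
              D.length + (E.length - (D'.length + (p - D.length) - D'.length))
            else D.length + (D'.length + (p - D.length) - D'.length))
        refine ⟨by omega, by omega, ?_⟩
        rw [if_neg (by simp)]
        omega)
      (fun qn pn hc => by
        have hc' : D'.length ≤ qn ∧ qn ≤ D'.length + E.length ∧
            pn = (if (false : Bool) then D.length + (E.length - (qn - D'.length))
              else D.length + (qn - D'.length)) := hc
        obtain ⟨h1, h2, h3⟩ := hc'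
        rw [if_neg (by simp)] at h3
        show D.length ≤ pn ∧ pn ≤ D.length + E.length ∧ qn = D'.length + (pn - D.length)
        omega)
      φ (fun i x q => ⟨_, hca i x q⟩)
  · -- Case E' = strInv E, D' ≠ []
    rintro ⟨hE', hD'⟩ hca
    subst hE'
    obtain ⟨b', hb'⟩ := hp.2.1.2.1.resolve_left hD'
    have hw1 : w = D' ++ (strInv E ++ F') := by
      rw [hp.2.1.1, List.append_assoc]
    subst hw1
    have hsIlen : (strInv E).length = E.length := by
      unfold strInv
      simp
    have hwSI : ∀ j, (hj : j < E.length) →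
        (D' ++ (strInv E ++ F'))[D'.length + j]'(by
          simp only [List.length_append]; omega) =
          Letter.flip (E[E.length - 1 - j]'(by omega)) := by
      intro j hj
      rw [List.getElem_append_right (by omega : D'.length ≤ D'.length + j)]
      rw [getElem_congr_idx _ (show D'.length + j - D'.length = j from by omega)]
      rw [List.getElem_append_left (show j < (strInv E).length from by omega)]
      show (strInv E)[j]'(by omega) = _
      unfold strInv
      rw [List.getElem_reverse, List.getElem_map]
      rw [getElem_congr_idx E
        (show (List.map Letter.flip E).length - 1 - j = E.length - 1 - j from by simp)]
    have hD'len : 1 ≤ D'.length := by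
      have := List.length_pos_iff.2 hD'
      omega
    have hwb' : (D' ++ (strInv E ++ F'))[D'.length - 1]'(by
        simp only [List.length_append]; omega) = Letter.ar b' := by
      rw [List.getElem_append_left (show D'.length - 1 < D'.length from by omega)]
      have h2 : D'.getLast? = some (D'[D'.length - 1]'(by omega)) := by
        rw [List.getLast?_eq_getElem?]
        exact List.getElem?_eq_getElem (by omega)
      rw [hb'] at h2
      exact (Option.some.inj h2).symm
    have hτw : ∀ p, D.length ≤ p → (hp2 : p < D.length + E.length) →
        G.Link (D' ++ (strInv E ++ F'))
          (toArrow (((D ++ E) ++ Letter.ar a :: v₀)[p]'(by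
            simp only [List.length_append, List.length_cons]; omega)))
          (D'.length + (E.length - (p + 1 - D.length)))
          (D'.length + (E.length - (p - D.length))) := by
      intro p hp1 hp2
      obtain ⟨c, hc⟩ := hEinv p hp2
      left
      refine ⟨⟨D'.length + (E.length - (p - D.length) - 1), by
        simp only [List.length_append]; omega⟩, ?_,
        show D'.length + (E.length - (p + 1 - D.length)) =
          D'.length + (E.length - (p - D.length) - 1) from by omega,
        show D'.length + (E.length - (p - D.length)) =
          D'.length + (E.length - (p - D.length) - 1) + 1 from by omega⟩
      rw [List.get_eq_getElem]
      show (D' ++ (strInv E ++ F'))[D'.length + (E.length - (p - D.length) - 1)]'_ = _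
      rw [hwSI (E.length - (p - D.length) - 1) (by omega)]
      rw [getElem_congr_idx E (show E.length - 1 - (E.length - (p - D.length) - 1) =
        p - D.length from by omega)]
      rw [← hvE p hp1 hp2, hc]
      rfl
    have hβL : G.Link (D' ++ (strInv E ++ F')) b' (D'.length - 1)
        (D'.length + (E.length - (D.length + E.length - D.length))) := by
      rw [show D'.length + (E.length - (D.length + E.length - D.length)) = D'.length
        from by omega]
      left
      refine ⟨⟨D'.length - 1, by simp only [List.length_append]; omega⟩, ?_, rfl,
        show D'.length = D'.length - 1 + 1 from by omega⟩
      rw [List.get_eq_getElem]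
      exact hwb'
    have hkill : ∀ (e : G.A) (q' : ℕ),
        ¬ G.Link (D' ++ (strInv E ++ F')) e
          (D'.length + (E.length - (D.length - D.length))) q' := by
      rw [show D'.length + (E.length - (D.length - D.length)) = D'.length + E.length
        from by omega]
      intro e q' hL
      rcases hL with ⟨mm, hmm, hpm, hqm⟩ | ⟨mm, hmm, hqm, hpm⟩
      · -- ar: w[D'.length + E.length] is the head of F' (or out of range) : inv or absent
        rw [List.get_eq_getElem] at hmm
        have hmmlt := mm.isLt
        have hwlen2 : (D' ++ (strInv E ++ F')).length =
            D'.length + ((strInv E).length + F'.length) := by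
          simp
        have hF'ne : F' ≠ [] := by
          intro hcon
          have h2 := congrArg List.length hcon
          simp only [List.length_nil] at h2
          omega
        obtain ⟨b₂, hb₂⟩ := hp.2.1.2.2.resolve_left hF'ne
        have hF'pos : 0 < F'.length := List.length_pos_iff.2 hF'ne
        have h1 : (D' ++ (strInv E ++ F'))[(mm : ℕ)] = Letter.inv b₂ := by
          rw [List.getElem_append_right (show D'.length ≤ (mm : ℕ) from by omega)]
          rw [getElem_congr_idx _ (show (mm : ℕ) - D'.length = E.length from by omega)]
          rw [List.getElem_append_right (show (strInv E).length ≤ E.length from by omega)]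
          rw [getElem_congr_idx _ (show E.length - (strInv E).length = 0 from by omega)]
          have h8 : F'[0]? = some (Letter.inv b₂) := by
            rw [← List.head?_eq_getElem?]
            exact hb₂
          rw [List.getElem?_eq_getElem (by omega)] at h8
          exact Option.some.inj h8
        rw [h1] at hmm
        exact nomatch hmm
      · -- inv: w[D'.length + E.length - 1] = flip E[0] is direct
        rw [List.get_eq_getElem] at hmm
        obtain ⟨c, hc⟩ := hEletter 0 (by omega)
        have h1 : (D' ++ (strInv E ++ F'))[(mm : ℕ)] = Letter.ar c := by
          rw [getElem_congr_idx _ (show (mm : ℕ) = D'.length + (E.length - 1) from by omega)]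
          rw [hwSI (E.length - 1) (by omega)]
          rw [getElem_congr_idx E (show E.length - 1 - (E.length - 1) = 0 from by omega), hc]
          rfl
        rw [h1] at hmm
        exact nomatch hmm
    have hvtx : ∀ p, D.length ≤ p → p ≤ D.length + E.length →
        G.vtxN s₀w (D' ++ (strInv E ++ F')) (D'.length + (E.length - (p - D.length))) =
        G.vtxN s₀v ((D ++ E) ++ Letter.ar a :: v₀) p := by
      intro p hp1 hp2
      by_cases hpe : p < D.length + E.length
      · rw [show D'.length + (E.length - (p - D.length)) =
          (D'.length + (E.length - (p - D.length) - 1)) + 1 from by omega,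
          vtx_tgt s₀w _ hw.1.1 (by simp only [List.length_append]; omega)]
        rw [vtx_src s₀v _ (by simp only [List.length_append, List.length_cons]; omega)]
        rw [hwSI (E.length - (p - D.length) - 1) (by omega)]
        rw [getElem_congr_idx E (show E.length - 1 - (E.length - (p - D.length) - 1) =
          p - D.length from by omega)]
        rw [hvE p hp1 hpe]
        obtain ⟨c, hc⟩ := hEletter (p - D.length) (by omega)
        rw [hc]
        rfl
      · have hpe2 : p = D.length + E.length := by omega
        subst hpe2
        rw [show D'.length + (E.length - (D.length + E.length - D.length)) = D'.length
          from by omega]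
        rw [vtx_src s₀w _ (by simp only [List.length_append]; omega)]
        rw [show D.length + E.length = (D.length + (E.length - 1)) + 1 from by omega,
          vtx_tgt s₀v _ hv.1.1 (by simp only [List.length_append, List.length_cons]; omega)]
        rw [getElem_congr_idx _ (show D'.length = D'.length + 0 from by omega)]
        rw [hwSI 0 (by omega)]
        rw [getElem_congr_idx E (show E.length - 1 - 0 = E.length - 1 from by omega)]
        rw [hvE (D.length + (E.length - 1)) (by omega) (by omega)]
        rw [getElem_congr_idx E
          (show D.length + (E.length - 1) - D.length = E.length - 1 from by omega)]
        obtain ⟨c, hc⟩ := hEletter (E.length - 1) (by omega)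
        rw [hc]
        rfl
    exact L45.key s₀v _ s₀w _ hfinG hlen2 hG3 hv.1 hw.1 D.length E.length hm hlen hEinv
      hFar hSD b' (fun p => D'.length + (E.length - (p - D.length))) (D'.length - 1)
      hτw hβL hkill hvtx
      (fun p p' h1 h2 h3 h4 h5 => by
        have h6 : D'.length + (E.length - (p - D.length)) =
          D'.length + (E.length - (p' - D.length)) := h5
        omega)
      (fun qn pn => D'.length ≤ qn ∧ qn ≤ D'.length + E.length ∧
        pn = (if (true : Bool) then D.length + (E.length - (qn - D'.length))
          else D.length + (qn - D'.length)))
      (fun p h1 h2 => by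
        show D'.length ≤ D'.length + (E.length - (p - D.length)) ∧
          D'.length + (E.length - (p - D.length)) ≤ D'.length + E.length ∧
          p = (if (true : Bool) then
              D.length + (E.length - (D'.length + (E.length - (p - D.length)) - D'.length))
            else D.length + (D'.length + (E.length - (p - D.length)) - D'.length))
        refine ⟨by omega, by omega, ?_⟩
        rw [if_pos (by simp)]
        omega)
      (fun qn pn hc => by
        have hc' : D'.length ≤ qn ∧ qn ≤ D'.length + E.length ∧
            pn = (if (true : Bool) then D.length + (E.length - (qn - D'.length))
              else D.length + (qn - D'.length)) := hc
        obtain ⟨h1, h2, h3⟩ := hc'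
        rw [if_pos (by simp)] at h3
        show D.length ≤ pn ∧ pn ≤ D.length + E.length ∧
          qn = D'.length + (E.length - (pn - D.length))
        omega)
      φ (fun i x q => ⟨_, hca i x q⟩)
end

section
/- Let A be a gentle algebra, w a string, and α an arrow such that w does not end on a peak via β, i.e., wβ⁻¹ is a string for some arrow β. Then the hook extension w_h = w β⁻¹ V_β⁻¹ is again a string, where V_β is the inverse string such that N_β = V_β β U_β starts in a deep and ends on a peak; dually, if αw is a string then _h w = V_α α w is a string. -/
open Classical

section Hook

variable {G : GQ}

lemma Letter.flip_flip (l : Letter G) : l.flip.flip = l := by cases l <;> rfl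

lemma Letter.flip_src (l : Letter G) : l.flip.src = l.tgt := by cases l <;> rfl

lemma Letter.flip_tgt (l : Letter G) : l.flip.tgt = l.src := by cases l <;> rfl

lemma strInv_strInv (w : List (Letter G)) : strInv (strInv w) = w := by
  have h : Letter.flip ∘ Letter.flip = (id : Letter G → Letter G) :=
    funext Letter.flip_flip
  simp [strInv, List.map_reverse, List.map_map, h]

lemma infix_strInv {q w : List (Letter G)} (h : q <:+: strInv w) : strInv q <:+: w := by
  have h2 := (h.map Letter.flip).reverse
  rw [show (List.map Letter.flip (strInv w)).reverse = strInv (strInv w) from rfl,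
    strInv_strInv] at h2
  exact h2

lemma isStringWord_infix {q w : List (Letter G)} (hq : q <:+: w)
    (hw : G.IsStringWord w) : G.IsStringWord q := by
  refine ⟨hw.1.infix hq, fun p hp => ?_⟩
  obtain ⟨h1, h2⟩ := hw.2 p hp
  exact ⟨fun h => h1 (h.trans hq), fun h => h2 (h.trans hq)⟩

lemma isStringWord_strInv {w : List (Letter G)} (hw : G.IsStringWord w) :
    G.IsStringWord (strInv w) := by
  constructor
  · show List.IsChain _ _
    rw [strInv, List.isChain_reverse, List.isChain_map]
    refine hw.1.imp ?_
    intro a b ⟨h1, h2⟩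
    constructor
    · rw [Letter.flip_tgt, Letter.flip_src, h1]
    · rw [Letter.flip_flip]
      exact fun h => h2 h.symm
  · intro p hp
    obtain ⟨h1, h2⟩ := hw.2 p hp
    constructor
    · intro h
      apply h2
      exact infix_strInv h
    · intro h
      apply h1
      have := infix_strInv h
      rwa [strInv_strInv] at this

lemma infix_two_split {α : Type*} : ∀ (X : List α) (c : α) (Y : List α) (q : List α),
    q.length ≤ 2 → q <:+: X ++ c :: Y → q <:+: X ++ [c] ∨ q <:+: c :: Y := by
  intro X
  induction X with
  | nil => intro c Y q _ h; exact Or.inr h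
  | cons x X ih =>
    intro c Y q hq h
    rw [List.cons_append, List.infix_cons_iff] at h
    rcases h with h | h
    · left
      have hlen : q.length ≤ (x :: (X ++ [c])).length := by
        simp; omega
      have : q = ((x :: (X ++ [c])) ++ Y).take q.length := by
        have := List.prefix_iff_eq_take.mp h
        simpa using this
      rw [List.take_append_of_le_length hlen] at this
      exact (this ▸ List.take_prefix _ _).isInfix
    · rcases ih c Y q hq h with h' | h'
      · exact Or.inl (h'.trans (List.infix_cons (List.infix_refl _)))
      · exact Or.inr h'

lemma glue_stringWord (hrel2 : ∀ p, G.rel p → p.length = 2)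
    {X Y : List (Letter G)} {c : Letter G}
    (h1 : G.IsStringWord (X ++ [c])) (h2 : G.IsStringWord (c :: Y)) :
    G.IsStringWord (X ++ c :: Y) := by
  constructor
  · have : X ++ c :: Y = (X ++ [c]) ++ Y := by simp
    rw [this]
    show List.IsChain _ _
    rw [List.isChain_append]
    refine ⟨h1.1, (List.isChain_cons.mp h2.1).2, ?_⟩
    intro a ha b hb
    rw [show (X ++ [c]).getLast? = some c by simp] at ha
    simp at ha
    subst ha
    exact (List.isChain_cons.mp h2.1).1 b hb
  · intro p hp
    have hl : (p.map (Letter.ar (G := G))).length = 2 := by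
      simp [hrel2 p hp]
    have hl' : (strInv (p.map (Letter.ar (G := G)))).length = 2 := by
      simp [strInv, hrel2 p hp]
    constructor
    · intro h
      rcases infix_two_split X c Y _ (by omega) h with h' | h'
      · exact (h1.2 p hp).1 h'
      · exact (h2.2 p hp).1 h'
    · intro h
      rcases infix_two_split X c Y _ (by omega) h with h' | h'
      · exact (h1.2 p hp).2 h'
      · exact (h2.2 p hp).2 h'

end Hook

/-- If `w` does not end on a peak, witnessed by an arrow `β` with `wβ⁻¹` a string, then the
hook extension `w_h = w β⁻¹ V_β⁻¹` is again a string; dually if `αw` is a string then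
`_h w = V_α α w` is a string. -/
theorem stmt18 (G : GQ) (hG : G.IsGentle) (s₀ : G.V) (w : List (Letter G))
    (hw : G.GoodStr s₀ w) :
    (∀ (b : G.A) (Vb Ub : List (Letter G)), G.t b = G.endVtx s₀ w →
        G.IsStringWord (w ++ [Letter.inv b]) → G.NCond b Vb Ub →
        G.IsStringWord (w ++ Letter.inv b :: strInv Vb)) ∧
    (∀ (a : G.A) (Va Ua : List (Letter G)), G.t a = s₀ →
        G.IsStringWord (Letter.ar a :: w) → G.NCond a Va Ua →
        G.IsStringWord (Va ++ Letter.ar a :: w)) := by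
  have hrel2 := hG.2.1
  constructor
  · intro b Vb Ub htb hwb hN
    have hNstr : G.IsStringWord (strInv (Vb ++ Letter.ar b :: Ub)) :=
      isStringWord_strInv hN.2.2.1
    have heq : strInv (Vb ++ Letter.ar b :: Ub)
        = strInv Ub ++ (Letter.inv b :: strInv Vb) := by
      simp [strInv, Letter.flip]
    have hsub : (Letter.inv b :: strInv Vb) <:+: strInv (Vb ++ Letter.ar b :: Ub) := by
      rw [heq]; exact (List.suffix_append _ _).isInfix
    exact glue_stringWord hrel2 hwb (isStringWord_infix hsub hNstr)
  · intro a Va Ua hta haw hN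
    have hpre : (Va ++ [Letter.ar a]) <:+: (Va ++ Letter.ar a :: Ua) := by
      have : Va ++ Letter.ar a :: Ua = (Va ++ [Letter.ar a]) ++ Ua := by simp
      rw [this]; exact (List.prefix_append _ _).isInfix
    exact glue_stringWord hrel2 (isStringWord_infix hpre hN.2.2.1) haw
end
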